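/- arXiv:2002.00304 — 3 statements merged into one kernel-verified Lean document; each statement's English description precedes it below -/
import Mathlib

section
/- Let R be an alternative ring with a nontrivial idempotent e₁ satisfying conditions (i) and (ii), let n ≥ 2 be an integer and let D : R → R be a multiplicative Lie n-derivation. Then for every a ∈ R₁₁ and every b ∈ R₁₂ ∪ R₂₁ there exists z ∈ Z(R) such that D(a + b) = D(a) + D(b) + z. -/
/-- The commutative center of a (possibly non-associative, non-unital) ring. -/
def rctr (R : Type*) [NonUnitalNonAssocRing R] : Set R := {z | ∀ x, z * x = x * z}

/-- `R` is an alternative ring. -/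
def IsAlt (R : Type*) [NonUnitalNonAssocRing R] : Prop :=
  ∀ x y : R, (x * x) * y = x * (x * y) ∧ (y * x) * x = y * (x * x)

/-- Peirce components relative to an idempotent `e`. -/
def P11 {R : Type*} [NonUnitalNonAssocRing R] (e : R) : Set R := {x | e * x = x ∧ x * e = x}
def P12 {R : Type*} [NonUnitalNonAssocRing R] (e : R) : Set R := {x | e * x = x ∧ x * e = 0}
def P21 {R : Type*} [NonUnitalNonAssocRing R] (e : R) : Set R := {x | e * x = 0 ∧ x * e = x}
def P22 {R : Type*} [NonUnitalNonAssocRing R] (e : R) : Set R := {x | e * x = 0 ∧ x * e = 0}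

/-- The iterated commutator `p_n`: `p_1(x) = x`,
`p_n(x_1,…,x_n) = [p_{n-1}(x_1,…,x_{n-1}), x_n]`. -/
def pn {R : Type*} [NonUnitalNonAssocRing R] : (n : ℕ) → (Fin n → R) → R
  | 0, _ => 0
  | 1, x => x 0
  | (m+2), x =>
      pn (m+1) (fun i => x i.castSucc) * x (Fin.last (m+1))
        - x (Fin.last (m+1)) * pn (m+1) (fun i => x i.castSucc)

/-- A (not necessarily additive) map `D` is a multiplicative Lie `n`-derivation. -/
def IsMultLieNDeriv {R : Type*} [NonUnitalNonAssocRing R] (n : ℕ) (D : R → R) : Prop :=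
  ∀ x : Fin n → R, D (pn n x) = ∑ i : Fin n, pn n (Function.update x i (D (x i)))


section AuxLemmas
variable {R : Type*} [NonUnitalNonAssocRing R]

theorem linL (halt : IsAlt R) (x y z : R) :
    x*y*z + y*x*z = x*(y*z) + y*(x*z) := by
  have h := (halt (x+y) z).1
  simp only [add_mul, mul_add] at h
  rw [(halt x z).1, (halt y z).1] at h
  linear_combination (norm := abel1) h

theorem linR (halt : IsAlt R) (w x z : R) :
    w*x*z + w*z*x = w*(x*z) + w*(z*x) := by
  have h := (halt (x+z) w).2
  simp only [add_mul, mul_add] at h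
  rw [(halt x w).2, (halt z w).2] at h
  linear_combination (norm := abel1) h

theorem flexlin (halt : IsAlt R) (e u v : R) :
    u*e*v + v*e*u = u*(e*v) + v*(e*u) := by
  have h1 := linL halt u e v
  have h2 := linR halt e u v
  have h3 := linL halt e v u
  linear_combination (norm := abel1) h1 - h2 + h3

variable {e x y a t : R}

theorem mul12_11 (halt : IsAlt R) (hx1 : e*x = x) (hx2 : x*e = 0) (ha1 : e*a = a) (ha2 : a*e = a) :
    x*a = 0 := by
  have h := flexlin halt e x a
  rw [hx2, ha2, ha1, hx1] at h
  try simp only [zero_mul, mul_zero] at h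
  first | linear_combination (norm := abel1) h | linear_combination (norm := abel1) -h

theorem mul11_21 (halt : IsAlt R) (ha1 : e*a = a) (ha2 : a*e = a) (hy1 : e*y = 0) (hy2 : y*e = y) :
    a*y = 0 := by
  have h := flexlin halt e a y
  rw [ha2, hy2, hy1, ha1] at h
  try simp only [zero_mul, mul_zero] at h
  first | linear_combination (norm := abel1) h | linear_combination (norm := abel1) -h

theorem mul22_12 (halt : IsAlt R) (ht1 : e*t = 0) (ht2 : t*e = 0) (hx1 : e*x = x) (hx2 : x*e = 0) :
    t*x = 0 := by
  have h := flexlin halt e t x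
  rw [ht2, hx2, hx1, ht1] at h
  try simp only [zero_mul, mul_zero] at h
  first | linear_combination (norm := abel1) h | linear_combination (norm := abel1) -h | exact h | exact h.symm

theorem mul21_22 (halt : IsAlt R) (hy1 : e*y = 0) (hy2 : y*e = y) (ht1 : e*t = 0) (ht2 : t*e = 0) :
    y*t = 0 := by
  have h := flexlin halt e y t
  rw [hy2, ht2, ht1, hy1] at h
  try simp only [zero_mul, mul_zero] at h
  first | linear_combination (norm := abel1) h | linear_combination (norm := abel1) -h | exact h | exact h.symm

theorem mul11_12 (halt : IsAlt R) (ha1 : e*a = a) (ha2 : a*e = a) (hx1 : e*x = x) (hx2 : x*e = 0) :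
    e*(a*x) = a*x ∧ (a*x)*e = 0 := by
  constructor
  · have h := linL halt e a x
    rw [ha1, ha2, hx1] at h
    try simp only [zero_mul, mul_zero] at h
    first | linear_combination (norm := abel1) h | linear_combination (norm := abel1) -h
  · have h := linR halt a x e
    rw [hx2, ha2, hx1] at h
    try simp only [zero_mul, mul_zero] at h
    first | linear_combination (norm := abel1) h | linear_combination (norm := abel1) -h

theorem mul21_11 (halt : IsAlt R) (hy1 : e*y = 0) (hy2 : y*e = y) (ha1 : e*a = a) (ha2 : a*e = a) :
    e*(y*a) = 0 ∧ (y*a)*e = y*a := by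
  constructor
  · have h := linL halt e y a
    rw [hy1, hy2, ha1] at h
    try simp only [zero_mul, mul_zero] at h
    first | linear_combination (norm := abel1) h | linear_combination (norm := abel1) -h
  · have h := linR halt y a e
    rw [hy2, ha2, ha1] at h
    try simp only [zero_mul, mul_zero] at h
    first | linear_combination (norm := abel1) h | linear_combination (norm := abel1) -h

theorem mul12_21 (halt : IsAlt R) (hx1 : e*x = x) (hx2 : x*e = 0) (hy1 : e*y = 0) (hy2 : y*e = y) :
    e*(x*y) = x*y ∧ (x*y)*e = x*y := by
  constructor
  · have h := linL halt e x y
    rw [hx1, hx2, hy1] at h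
    try simp only [zero_mul, mul_zero] at h
    first | linear_combination (norm := abel1) h | linear_combination (norm := abel1) -h
  · have h := linR halt x y e
    rw [hx2, hy2, hy1] at h
    try simp only [zero_mul, mul_zero] at h
    first | linear_combination (norm := abel1) h | linear_combination (norm := abel1) -h

theorem mul21_12 (halt : IsAlt R) (hy1 : e*y = 0) (hy2 : y*e = y) (hx1 : e*x = x) (hx2 : x*e = 0) :
    e*(y*x) = 0 ∧ (y*x)*e = 0 := by
  constructor
  · have h := linL halt e y x
    rw [hy1, hy2, hx1] at h
    try simp only [zero_mul, mul_zero] at h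
    first | linear_combination (norm := abel1) h | linear_combination (norm := abel1) -h
  · have h := linR halt y x e
    rw [hy2, hx2, hx1] at h
    try simp only [zero_mul, mul_zero] at h
    first | linear_combination (norm := abel1) h | linear_combination (norm := abel1) -h

theorem mul12_22 (halt : IsAlt R) (hx1 : e*x = x) (hx2 : x*e = 0) (ht1 : e*t = 0) (ht2 : t*e = 0) :
    e*(x*t) = x*t ∧ (x*t)*e = 0 := by
  constructor
  · have h := linL halt e x t
    rw [hx1, hx2, ht1] at h
    try simp only [zero_mul, mul_zero] at h
    first | linear_combination (norm := abel1) h | linear_combination (norm := abel1) -h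
  · have h := linR halt x t e
    rw [hx2, ht2, ht1] at h
    try simp only [zero_mul, mul_zero] at h
    first | linear_combination (norm := abel1) h | linear_combination (norm := abel1) -h | exact h | exact h.symm

theorem mul22_21 (halt : IsAlt R) (ht1 : e*t = 0) (ht2 : t*e = 0) (hy1 : e*y = 0) (hy2 : y*e = y) :
    e*(t*y) = 0 ∧ (t*y)*e = t*y := by
  constructor
  · have h := linL halt e t y
    rw [ht1, ht2, hy1] at h
    try simp only [zero_mul, mul_zero] at h
    first | linear_combination (norm := abel1) h | linear_combination (norm := abel1) -h | exact h | exact h.symm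
  · have h := linR halt t y e
    rw [ht2, hy2, hy1] at h
    try simp only [zero_mul, mul_zero] at h
    first | linear_combination (norm := abel1) h | linear_combination (norm := abel1) -h | exact h | exact h.symm

theorem pn_succ (m : ℕ) (x : Fin (m+2) → R) :
    pn (m+2) x = pn (m+1) (fun i => x i.castSucc) * x (Fin.last (m+1))
      - x (Fin.last (m+1)) * pn (m+1) (fun i => x i.castSucc) := rfl

theorem pn_one (x : Fin 1 → R) : pn 1 x = x 0 := rfl

theorem pn_two (x : Fin 2 → R) : pn 2 x = x 0 * x 1 - x 1 * x 0 := rfl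

theorem pn_eq_zero : ∀ (m : ℕ) (x : Fin (m+2) → R) (i : Fin (m+2)), x i = 0 → pn (m+2) x = 0 := by
  intro m
  induction m with
  | zero =>
    intro x i hi
    rw [pn_two]
    have h2 : x 0 = 0 ∨ x 1 = 0 := by
      rcases i with ⟨_|_|iv, hv⟩
      · exact Or.inl hi
      · exact Or.inr hi
      · omega
    rcases h2 with h2 | h2 <;> rw [h2] <;> simp
  | succ k ih =>
    intro x i hi
    rcases Fin.eq_castSucc_or_eq_last i with ⟨j, rfl⟩ | rfl
    · rw [pn_succ, ih (fun t => x t.castSucc) j hi]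
      simp
    · rw [pn_succ, hi]
      simp

theorem pn_update_add : ∀ (n : ℕ) (x : Fin n → R) (i : Fin n) (u v : R),
    pn n (Function.update x i (u+v))
      = pn n (Function.update x i u) + pn n (Function.update x i v) := by
  intro n
  induction n with
  | zero => exact fun x i => i.elim0
  | succ m ih =>
    cases m with
    | zero =>
      intro x i u v
      have hi : i = 0 := Fin.fin_one_eq_zero i
      subst hi
      simp [pn_one]
    | succ k =>
      intro x i u v
      rcases Fin.eq_castSucc_or_eq_last i with ⟨j, rfl⟩ | rfl
      · rw [pn_succ, pn_succ, pn_succ]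
        have hfront : ∀ w : R, (fun t : Fin (k+1) => Function.update x j.castSucc w t.castSucc)
            = Function.update (fun t : Fin (k+1) => x t.castSucc) j w := by
          intro w; funext t
          rcases eq_or_ne t j with rfl | h
          · simp
          · rw [Function.update_of_ne (fun hc => h (Fin.castSucc_injective _ hc)),
              Function.update_of_ne h]
        have hlast : ∀ w : R, Function.update x j.castSucc w (Fin.last (k+1)) = x (Fin.last (k+1)) :=
          fun w => Function.update_of_ne (Fin.castSucc_lt_last j).ne' _ _
        rw [hfront, hfront, hfront, hlast, hlast, hlast, ih (fun t => x t.castSucc) j u v]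
        generalize pn (k+1) (Function.update (fun t : Fin (k+1) => x t.castSucc) j u) = A
        generalize pn (k+1) (Function.update (fun t : Fin (k+1) => x t.castSucc) j v) = B
        simp only [add_mul, mul_add]
        abel
      · rw [pn_succ, pn_succ, pn_succ]
        have hfront : ∀ w : R, (fun t : Fin (k+1) => Function.update x (Fin.last (k+1)) w t.castSucc)
            = fun t : Fin (k+1) => x t.castSucc := by
          intro w; funext t
          exact Function.update_of_ne (Fin.castSucc_lt_last t).ne _ _
        have hlast : ∀ w : R, Function.update x (Fin.last (k+1)) w (Fin.last (k+1)) = w :=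
          fun w => Function.update_self _ _ _
        rw [hfront, hfront, hfront, hlast, hlast, hlast]
        generalize pn (k+1) (fun t : Fin (k+1) => x t.castSucc) = A
        simp only [add_mul, mul_add]
        abel

theorem pn_update_zero (m : ℕ) (x : Fin (m+2) → R) (i : Fin (m+2)) :
    pn (m+2) (Function.update x i 0) = 0 :=
  pn_eq_zero m _ i (Function.update_self _ _ _)

theorem pn_update_neg (m : ℕ) (x : Fin (m+2) → R) (i : Fin (m+2)) (u : R) :
    pn (m+2) (Function.update x i (-u)) = - pn (m+2) (Function.update x i u) := by
  have h := pn_update_add (m+2) x i u (-u)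
  have h0 : u + -u = (0:R) := by abel
  rw [h0, pn_update_zero] at h
  exact eq_neg_of_add_eq_zero_right h.symm

theorem pn_update_sub (m : ℕ) (x : Fin (m+2) → R) (i : Fin (m+2)) (u v : R) :
    pn (m+2) (Function.update x i (u-v))
      = pn (m+2) (Function.update x i u) - pn (m+2) (Function.update x i v) := by
  have h0 : u - v = u + -v := by abel
  rw [h0, pn_update_add (m+2) x i u (-v), pn_update_neg]
  abel

def adE {R : Type*} [NonUnitalNonAssocRing R] (e : R) (u : R) : R := u * e - e * u

theorem adE_zero (e : R) : adE e 0 = 0 := by simp [adE]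

theorem adE_add (e u v : R) : adE e (u+v) = adE e u + adE e v := by
  simp only [adE, add_mul, mul_add]; abel

theorem adE_neg (e u : R) : adE e (-u) = - adE e u := by
  simp only [adE, neg_mul, mul_neg]; abel

theorem adE_iter_zero (e : R) (k : ℕ) : (adE e)^[k] 0 = 0 :=
  Function.iterate_fixed (adE_zero e) k

theorem adE_iter_add (e : R) : ∀ (k : ℕ) (u v : R),
    (adE e)^[k] (u+v) = (adE e)^[k] u + (adE e)^[k] v := by
  intro k
  induction k with
  | zero => intro u v; simp
  | succ n ih =>
    intro u v
    rw [Function.iterate_succ_apply, Function.iterate_succ_apply, Function.iterate_succ_apply,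
      adE_add, ih]

theorem adE_iter_neg (e : R) : ∀ (k : ℕ) (u : R),
    (adE e)^[k] (-u) = -((adE e)^[k] u) := by
  intro k
  induction k with
  | zero => intro u; simp
  | succ n ih =>
    intro u
    rw [Function.iterate_succ_apply, Function.iterate_succ_apply, adE_neg, ih]

theorem adE_kill (e u : R) (h : adE e u = 0) (k : ℕ) : (adE e)^[k+1] u = 0 := by
  rw [Function.iterate_succ_apply, h, adE_iter_zero]

theorem adE_sign (e u : R) (h : adE e u = -u) :
    ∀ k : ℕ, (adE e)^[k] u = u ∨ (adE e)^[k] u = -u := by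
  intro k
  induction k with
  | zero => exact Or.inl rfl
  | succ n ih =>
    rw [Function.iterate_succ_apply']
    rcases ih with h1 | h1
    · rw [h1, h]; exact Or.inr rfl
    · rw [h1, adE_neg, h]; exact Or.inl (neg_neg u)

theorem adE_sign_zero (e u : R) (h : adE e u = -u) (k : ℕ)
    (h0 : (adE e)^[k] u = 0) : u = 0 := by
  rcases adE_sign e u h k with h1 | h1
  · rw [h1] at h0; exact h0
  · rw [h1] at h0; exact neg_eq_zero.mp h0

theorem key_diff (m : ℕ) (D : R → R) (hD : IsMultLieNDeriv (m+2) D)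
    (x : Fin (m+2) → R) (i : Fin (m+2)) (u v : R) :
    D (pn (m+2) (Function.update x i (u+v))) - D (pn (m+2) (Function.update x i u))
      - D (pn (m+2) (Function.update x i v))
      = pn (m+2) (Function.update x i (D (u+v) - D u - D v)) := by
  have h1 := hD (Function.update x i (u+v))
  have h2 := hD (Function.update x i u)
  have h3 := hD (Function.update x i v)
  rw [h1, h2, h3, ← Finset.sum_sub_distrib, ← Finset.sum_sub_distrib]
  have hzero : ∀ b ∈ Finset.univ, b ≠ i →
      pn (m+2) (Function.update (Function.update x i (u+v)) b (D (Function.update x i (u+v) b)))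
      - pn (m+2) (Function.update (Function.update x i u) b (D (Function.update x i u b)))
      - pn (m+2) (Function.update (Function.update x i v) b (D (Function.update x i v b))) = 0 := by
    intro b _ hb
    rw [Function.update_of_ne hb, Function.update_of_ne hb, Function.update_of_ne hb,
      Function.update_comm hb.symm, Function.update_comm hb.symm, Function.update_comm hb.symm,
      pn_update_add (m+2) _ i u v]
    abel
  rw [Finset.sum_eq_single_of_mem i (Finset.mem_univ i) hzero]
  rw [Function.update_self, Function.update_self, Function.update_self,
    Function.update_idem, Function.update_idem, Function.update_idem,
    pn_update_sub, pn_update_sub]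

theorem pn_S1 (e : R) : ∀ (m : ℕ) (c : R),
    pn (m+1) (Function.update (fun _ : Fin (m+1) => e) 0 c) = (adE e)^[m] c := by
  intro m
  induction m with
  | zero => intro c; rw [pn_one]; simp
  | succ k ih =>
    intro c
    rw [pn_succ]
    have hfront : (fun j : Fin (k+1) => Function.update (fun _ : Fin (k+2) => e) 0 c j.castSucc)
        = Function.update (fun _ : Fin (k+1) => e) 0 c := by
      funext j
      rcases eq_or_ne j 0 with rfl | h
      · simp
      · rw [Function.update_of_ne (fun hc => h (by simpa using hc)), Function.update_of_ne h]
    have hlast : Function.update (fun _ : Fin (k+2) => e) 0 c (Fin.last (k+1)) = e := by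
      rw [Function.update_of_ne (Fin.ne_of_val_ne (by simp))]
    rw [hfront, hlast, ih c, Function.iterate_succ_apply']
    rfl

theorem pn_S1' (e : R) (m : ℕ) (c : R) :
    pn (m+2) (Function.update (fun _ : Fin (m+2) => e) 0 c) = (adE e)^[m+1] c :=
  pn_S1 e (m+1) c

theorem pn_S2 (e : R) : ∀ (m : ℕ) (x c : R),
    pn (m+2) (Function.update (Function.update (fun _ : Fin (m+2) => e) 0 x) 1 c)
      = (adE e)^[m] (x*c - c*x) := by
  intro m
  induction m with
  | zero =>
    intro x c
    rw [pn_two]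
    have h0 : Function.update (Function.update (fun _ : Fin 2 => e) 0 x) 1 c 0 = x := by
      rw [Function.update_of_ne (by decide), Function.update_self]
    have h1 : Function.update (Function.update (fun _ : Fin 2 => e) 0 x) 1 c 1 = c :=
      Function.update_self _ _ _
    rw [h0, h1]; simp
  | succ k ih =>
    intro x c
    rw [pn_succ]
    have hfront : (fun j : Fin (k+2) =>
        Function.update (Function.update (fun _ : Fin (k+3) => e) 0 x) 1 c j.castSucc)
        = Function.update (Function.update (fun _ : Fin (k+2) => e) 0 x) 1 c := by
      funext j
      rcases eq_or_ne j 1 with rfl | h1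
      · have hcs : (Fin.castSucc (1 : Fin (k+2))) = (1 : Fin (k+3)) := by
          apply Fin.ext; simp
        rw [hcs, Function.update_self, Function.update_self]
      · rw [Function.update_of_ne (fun hc => h1 (by apply Fin.ext; simpa [Fin.ext_iff] using hc)),
          Function.update_of_ne h1]
        rcases eq_or_ne j 0 with rfl | h0
        · simp
        · rw [Function.update_of_ne (fun hc => h0 (by simpa using hc)), Function.update_of_ne h0]
    have hlast : Function.update (Function.update (fun _ : Fin (k+3) => e) 0 x) 1 c
        (Fin.last (k+2)) = e := by
      rw [Function.update_of_ne (Fin.ne_of_val_ne (by simp)),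
        Function.update_of_ne (Fin.ne_of_val_ne (by simp))]
    rw [hfront, hlast, ih x c, Function.iterate_succ_apply']
    rfl

end AuxLemmas

theorem stmt1 {R : Type*} [NonUnitalNonAssocRing R] (halt : IsAlt R)
    (e₁ : R) (he : e₁ * e₁ = e₁) (hne : e₁ ≠ 0)
    (hnu : ¬ ∀ x : R, e₁ * x = x ∧ x * e₁ = x)
    (hcondi : ∀ a ∈ P11 e₁, ∀ b ∈ P22 e₁,
      (∀ x ∈ P12 e₁, (a + b) * x = x * (a + b)) → a + b ∈ rctr R)
    (hcondii : ∀ a ∈ P11 e₁, ∀ b ∈ P22 e₁,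
      (∀ x ∈ P21 e₁, (a + b) * x = x * (a + b)) → a + b ∈ rctr R)
    (n : ℕ) (hn : 2 ≤ n) (D : R → R) (hD : IsMultLieNDeriv n D) :
    ∀ a ∈ P11 e₁, ∀ b ∈ P12 e₁ ∪ P21 e₁, ∃ z ∈ rctr R, D (a + b) = D a + D b + z := by
  obtain ⟨m, rfl⟩ : ∃ m, n = m + 2 := ⟨n - 2, by omega⟩
  intro a ha b hb
  have ha1 : e₁ * a = a := ha.1
  have ha2 : a * e₁ = a := ha.2
  -- basic idempotent facts
  have lee : ∀ w : R, e₁*(e₁*w) = e₁*w := fun w => by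
    have h := (halt e₁ w).1; rw [he] at h; exact h.symm
  have ree : ∀ w : R, (w*e₁)*e₁ = w*e₁ := fun w => by
    have h := (halt e₁ w).2; rw [he] at h; exact h
  have flexe : ∀ w : R, (e₁*w)*e₁ = e₁*(w*e₁) := fun w => by
    have h := linR halt e₁ w e₁
    rw [he, lee w] at h
    linear_combination (norm := abel1) h
  -- D 0 = 0
  have hD0 : D 0 = 0 := by
    have h := hD (fun _ : Fin (m+2) => (0:R))
    have h0 : pn (m+2) (fun _ : Fin (m+2) => (0:R)) = 0 := pn_eq_zero m _ 0 rfl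
    rw [h0] at h
    rw [h]
    refine Finset.sum_eq_zero ?_
    intro i _
    rcases eq_or_ne i 0 with rfl | hi
    · refine pn_eq_zero m _ (Fin.last (m+1)) ?_
      rw [Function.update_of_ne (Fin.ne_of_val_ne (by simp))]
    · refine pn_eq_zero m _ 0 ?_
      rw [Function.update_of_ne (Ne.symm hi)]
  refine ⟨D (a+b) - D a - D b, ?_, by abel⟩
  -- Step 1: the difference is "diagonal"
  have hdiag := key_diff m D hD (fun _ : Fin (m+2) => e₁) 0 a b
  simp only [pn_S1'] at hdiag
  have hada : adE e₁ a = 0 := by simp [adE, ha1, ha2]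
  have hita : (adE e₁)^[m+1] a = 0 := adE_kill _ _ hada m
  rw [adE_iter_add, hita, zero_add, hD0] at hdiag
  have hTit : (adE e₁)^[m+1] (D (a+b) - D a - D b) = 0 := by
    rw [← hdiag]; abel
  have hdecomp : ∃ c1 c2 : R, e₁*c1 = c1 ∧ c1*e₁ = c1 ∧ e₁*c2 = 0 ∧ c2*e₁ = 0 ∧
      D (a+b) - D a - D b = c1 + c2 := by
    set w := D (a+b) - D a - D b with hw
    have h11a : e₁*(e₁*(w*e₁)) = e₁*(w*e₁) := lee (w*e₁)
    have h11b : (e₁*(w*e₁))*e₁ = e₁*(w*e₁) := by rw [flexe (w*e₁), ree w]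
    have h12 : adE e₁ (e₁*w - e₁*(w*e₁)) = -(e₁*w - e₁*(w*e₁)) := by
      simp only [adE, sub_mul, mul_sub, flexe w, h11b, lee w, lee (w*e₁)]
      abel
    have h21 : adE e₁ (w*e₁ - e₁*(w*e₁)) = (w*e₁ - e₁*(w*e₁)) := by
      simp only [adE, sub_mul, mul_sub, ree w, h11b, lee (w*e₁)]
      abel
    have hk1 : adE e₁ (e₁*(w*e₁)) = 0 := by
      simp only [adE, h11a, h11b, sub_self]
    have hk2 : adE e₁ (w - e₁*w - w*e₁ + e₁*(w*e₁)) = 0 := by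
      simp only [adE, sub_mul, mul_sub, add_mul, mul_add, ree w, flexe w, lee w,
        lee (w*e₁), h11a, h11b]
      abel
    have hsplit : w = (e₁*w - e₁*(w*e₁)) + (w*e₁ - e₁*(w*e₁))
        + (e₁*(w*e₁) + (w - e₁*w - w*e₁ + e₁*(w*e₁))) := by abel
    have hz11 : (adE e₁)^[m+1] (e₁*(w*e₁)) = 0 := adE_kill _ _ hk1 m
    have hz22 : (adE e₁)^[m+1] (w - e₁*w - w*e₁ + e₁*(w*e₁)) = 0 := adE_kill _ _ hk2 m
    have hfix21 : (adE e₁)^[m+1] (w*e₁ - e₁*(w*e₁)) = w*e₁ - e₁*(w*e₁) :=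
      Function.iterate_fixed h21 (m+1)
    have hcomb : (adE e₁)^[m+1] w
        = (adE e₁)^[m+1] (e₁*w - e₁*(w*e₁)) + (adE e₁)^[m+1] (w*e₁ - e₁*(w*e₁)) := by
      conv_lhs => rw [hsplit]
      rw [adE_iter_add, adE_iter_add, adE_iter_add, hz11, hz22, add_zero, add_zero]
    have h0 : (adE e₁)^[m+1] (e₁*w - e₁*(w*e₁)) + (w*e₁ - e₁*(w*e₁)) = 0 := by
      rw [← hfix21, ← hcomb]
      exact hTit
    have ht1221 : (e₁*w - e₁*(w*e₁)) = 0 ∧ (w*e₁ - e₁*(w*e₁)) = 0 := by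
      rcases adE_sign e₁ _ h12 (m+1) with hs | hs
      · rw [hs] at h0
        have he0 := congrArg (fun z => e₁ * z) h0
        simp only [mul_add, mul_sub, lee w, lee (w*e₁), h11a, mul_zero] at he0
        have h12z : e₁*w - e₁*(w*e₁) = 0 := by
          linear_combination (norm := abel1) he0
        refine ⟨h12z, ?_⟩
        rw [h12z, zero_add] at h0
        exact h0
      · rw [hs] at h0
        have he0 := congrArg (fun z => e₁ * z) h0
        simp only [mul_add, mul_neg, mul_sub, lee w, lee (w*e₁), h11a, mul_zero] at he0
        have h12z : e₁*w - e₁*(w*e₁) = 0 := by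
          first
          | linear_combination (norm := abel1) he0
          | linear_combination (norm := abel1) -he0
        refine ⟨h12z, ?_⟩
        rw [h12z, neg_zero, zero_add] at h0
        exact h0
    refine ⟨e₁*(w*e₁), w - e₁*w - w*e₁ + e₁*(w*e₁), h11a, h11b, ?_, ?_, ?_⟩
    · simp only [mul_add, mul_sub, lee w, lee (w*e₁), h11a]
      abel
    · simp only [add_mul, sub_mul, ree w, flexe w, h11b]
      abel
    · linear_combination (norm := abel1) ht1221.1 + ht1221.2
  obtain ⟨c1, c2, hc1a, hc1b, hc2a, hc2b, hT⟩ := hdecomp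
  rcases hb with hb | hb
  · -- b ∈ P12 : use x ∈ P21 and condition (ii)
    have hb1 : e₁ * b = b := hb.1
    have hb2 : b * e₁ = 0 := hb.2
    rw [hT]
    refine hcondii c1 ⟨hc1a, hc1b⟩ c2 ⟨hc2a, hc2b⟩ ?_
    intro x hx
    have hx1 : e₁ * x = 0 := hx.1
    have hx2 : x * e₁ = x := hx.2
    -- products
    have hax : a*x = 0 := mul11_21 halt ha1 ha2 hx1 hx2
    have pxa := mul21_11 halt hx1 hx2 ha1 ha2
    have pxb := mul21_12 halt hx1 hx2 hb1 hb2
    have pbx := mul12_21 halt hb1 hb2 hx1 hx2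
    have hxc1 := mul21_11 halt hx1 hx2 hc1a hc1b
    have hxc2 : x*c2 = 0 := mul21_22 halt hx1 hx2 hc2a hc2b
    have hc1x : c1*x = 0 := mul11_21 halt hc1a hc1b hx1 hx2
    have hc2x := mul22_21 halt hc2a hc2b hx1 hx2
    have hBb : adE e₁ (x*b - b*x) = 0 := by
      simp only [adE, sub_mul, mul_sub, pxb.1, pxb.2, pbx.1, pbx.2]
      abel
    have hBTeq : x*(D (a+b) - D a - D b) - (D (a+b) - D a - D b)*x = x*c1 - c2*x := by
      rw [hT, mul_add, add_mul, hxc2, hc1x]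
      abel
    have hBT : adE e₁ (x*(D (a+b) - D a - D b) - (D (a+b) - D a - D b)*x)
        = x*(D (a+b) - D a - D b) - (D (a+b) - D a - D b)*x := by
      rw [hBTeq]
      simp only [adE, sub_mul, mul_sub, hxc1.1, hxc1.2, hc2x.1, hc2x.2]
      abel
    have hst1 := key_diff m D hD (Function.update (fun _ : Fin (m+2) => e₁) 0 x) 1 a b
    simp only [pn_S2] at hst1
    have hst2 := key_diff m D hD (fun _ : Fin (m+2) => e₁) 0
      ((adE e₁)^[m] (x*a - a*x)) ((adE e₁)^[m] (x*b - b*x))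
    simp only [pn_S1'] at hst2
    have hBab : x*(a+b) - (a+b)*x = (x*a - a*x) + (x*b - b*x) := by
      rw [mul_add, add_mul]; abel
    have huv : (adE e₁)^[m] (x*a - a*x) + (adE e₁)^[m] (x*b - b*x)
        = (adE e₁)^[m] (x*(a+b) - (a+b)*x) := by
      rw [hBab, adE_iter_add]
    rw [huv, hst1] at hst2
    have hvz : (adE e₁)^[m+1] ((adE e₁)^[m] (x*b - b*x)) = 0 := by
      rw [← Function.iterate_add_apply]
      have hmm : m + 1 + m = (m + m) + 1 := by omega
      rw [hmm]
      exact adE_kill _ _ hBb (m+m)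
    have habk : (adE e₁)^[m+1] ((adE e₁)^[m] (x*(a+b) - (a+b)*x))
        = (adE e₁)^[m+1] ((adE e₁)^[m] (x*a - a*x)) := by
      rw [← huv, adE_iter_add, hvz, add_zero]
    rw [habk, hvz, hD0] at hst2
    have h0 : (adE e₁)^[m+1] ((adE e₁)^[m]
        (x*(D (a+b) - D a - D b) - (D (a+b) - D a - D b)*x)) = 0 := by
      rw [← hst2]; abel
    rw [Function.iterate_fixed hBT m, Function.iterate_fixed hBT (m+1)] at h0
    rw [hBTeq] at h0
    rw [mul_add, add_mul, hxc2, hc1x]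
    first
    | linear_combination (norm := abel1) h0
    | linear_combination (norm := abel1) -h0
  · -- b ∈ P21 : use x ∈ P12 and condition (i)
    have hb1 : e₁ * b = 0 := hb.1
    have hb2 : b * e₁ = b := hb.2
    rw [hT]
    refine hcondi c1 ⟨hc1a, hc1b⟩ c2 ⟨hc2a, hc2b⟩ ?_
    intro x hx
    have hx1 : e₁ * x = x := hx.1
    have hx2 : x * e₁ = 0 := hx.2
    -- products
    have hxa : x*a = 0 := mul12_11 halt hx1 hx2 ha1 ha2
    have pax := mul11_12 halt ha1 ha2 hx1 hx2
    have pxb := mul12_21 halt hx1 hx2 hb1 hb2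
    have pbx := mul21_12 halt hb1 hb2 hx1 hx2
    have hxc1 : x*c1 = 0 := mul12_11 halt hx1 hx2 hc1a hc1b
    have hxc2 := mul12_22 halt hx1 hx2 hc2a hc2b
    have hc1x := mul11_12 halt hc1a hc1b hx1 hx2
    have hc2x : c2*x = 0 := mul22_12 halt hc2a hc2b hx1 hx2
    have hBb : adE e₁ (x*b - b*x) = 0 := by
      simp only [adE, sub_mul, mul_sub, pxb.1, pxb.2, pbx.1, pbx.2]
      abel
    have hBTeq : x*(D (a+b) - D a - D b) - (D (a+b) - D a - D b)*x = x*c2 - c1*x := by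
      rw [hT, mul_add, add_mul, hxc1, hc2x]
      abel
    have hBT : adE e₁ (x*(D (a+b) - D a - D b) - (D (a+b) - D a - D b)*x)
        = -(x*(D (a+b) - D a - D b) - (D (a+b) - D a - D b)*x) := by
      rw [hBTeq]
      simp only [adE, sub_mul, mul_sub, hxc2.1, hxc2.2, hc1x.1, hc1x.2]
      abel
    have hst1 := key_diff m D hD (Function.update (fun _ : Fin (m+2) => e₁) 0 x) 1 a b
    simp only [pn_S2] at hst1
    have hst2 := key_diff m D hD (fun _ : Fin (m+2) => e₁) 0
      ((adE e₁)^[m] (x*a - a*x)) ((adE e₁)^[m] (x*b - b*x))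
    simp only [pn_S1'] at hst2
    have hBab : x*(a+b) - (a+b)*x = (x*a - a*x) + (x*b - b*x) := by
      rw [mul_add, add_mul]; abel
    have huv : (adE e₁)^[m] (x*a - a*x) + (adE e₁)^[m] (x*b - b*x)
        = (adE e₁)^[m] (x*(a+b) - (a+b)*x) := by
      rw [hBab, adE_iter_add]
    rw [huv, hst1] at hst2
    have hvz : (adE e₁)^[m+1] ((adE e₁)^[m] (x*b - b*x)) = 0 := by
      rw [← Function.iterate_add_apply]
      have hmm : m + 1 + m = (m + m) + 1 := by omega
      rw [hmm]
      exact adE_kill _ _ hBb (m+m)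
    have habk : (adE e₁)^[m+1] ((adE e₁)^[m] (x*(a+b) - (a+b)*x))
        = (adE e₁)^[m+1] ((adE e₁)^[m] (x*a - a*x)) := by
      rw [← huv, adE_iter_add, hvz, add_zero]
    rw [habk, hvz, hD0] at hst2
    have h0 : (adE e₁)^[m+1] ((adE e₁)^[m]
        (x*(D (a+b) - D a - D b) - (D (a+b) - D a - D b)*x)) = 0 := by
      rw [← hst2]; abel
    have hBT0 : x*(D (a+b) - D a - D b) - (D (a+b) - D a - D b)*x = 0 := by
      rcases adE_sign e₁ _ hBT m with hs | hs
      · rw [hs] at h0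
        exact adE_sign_zero e₁ _ hBT (m+1) h0
      · rw [hs, adE_iter_neg] at h0
        exact adE_sign_zero e₁ _ hBT (m+1) (neg_eq_zero.mp h0)
    rw [hBTeq] at hBT0
    rw [mul_add, add_mul, hxc1, hc2x]
    first
    | linear_combination (norm := abel1) hBT0
    | linear_combination (norm := abel1) -hBT0
end

section
/- Let R be an alternative ring with a nontrivial idempotent e₁ satisfying conditions (i) and (ii), let n ≥ 2 be an integer and let D : R → R be a multiplicative Lie n-derivation. Then for i ≠ j in {1,2} and all a, b ∈ R_ij one has D(a + b) = D(a) + D(b). -/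
namespace Stmt3Proof
set_option linter.unusedSectionVars false

variable {R : Type*} [NonUnitalNonAssocRing R]

private lemma cancel {a b c d : R} (h : c = d) (habel : a - b = c - d) : a = b := by
  have h0 : a - b = 0 := by rw [habel, h, sub_self]
  exact sub_eq_zero.mp h0

section RingFacts
variable (halt : IsAlt R)
include halt

lemma lA (x y z : R) : (x*y)*z + (y*x)*z = x*(y*z) + y*(x*z) := by
  have h := (halt (x+y) z).1
  have hx := (halt x z).1
  have hy := (halt y z).1
  simp only [add_mul, mul_add] at h
  rw [hx, hy] at h
  exact cancel h (by abel)

lemma lR (x y z : R) : z*(x*y) + z*(y*x) = (z*x)*y + (z*y)*x := by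
  have h := (halt (x+y) z).2
  have hx := (halt x z).2
  have hy := (halt y z).2
  simp only [add_mul, mul_add] at h
  rw [hx, hy] at h
  exact (cancel h (by abel)).symm

lemma flex (x y : R) : (x*y)*x = x*(y*x) := by
  have h := lA halt x y x
  have h2 := (halt x y).2
  rw [h2] at h
  exact cancel h (by abel)

variable (e : R) (he : e*e = e)
include he

lemma mul_e_e (x : R) : (x*e)*e = x*e := by
  have := (halt e x).2
  rw [he] at this; exact this

lemma e_e_mul (x : R) : e*(e*x) = e*x := by
  have := (halt e x).1
  rw [he] at this; exact this.symm

lemma e_mul_e (x : R) : e*(x*e) = (e*x)*e := (flex halt e x).symm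

end RingFacts

end Stmt3Proof
namespace Stmt3Proof

variable {R : Type*} [NonUnitalNonAssocRing R]

/-- The inner map `ad x = x*e - e*x`. -/
def adE (e : R) (x : R) : R := x*e - e*x

section AdFacts
variable (e : R)

lemma adE_add (x y : R) : adE e (x+y) = adE e x + adE e y := by
  simp only [adE, add_mul, mul_add]; abel

lemma adE_zero : adE e (0 : R) = 0 := by simp [adE]

lemma adE_neg (x : R) : adE e (-x) = -adE e x := by
  simp only [adE, neg_mul, mul_neg]; abel

lemma adE_sub (x y : R) : adE e (x-y) = adE e x - adE e y := by
  simp only [adE, sub_mul, mul_sub]; abel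

lemma adk_add (j : ℕ) (x y : R) : (adE e)^[j] (x+y) = (adE e)^[j] x + (adE e)^[j] y := by
  induction j generalizing x y with
  | zero => simp
  | succ j ih =>
    rw [Function.iterate_succ_apply, Function.iterate_succ_apply,
      Function.iterate_succ_apply, adE_add, ih]

lemma adk_zero (j : ℕ) : (adE e)^[j] (0 : R) = 0 :=
  Function.iterate_fixed (adE_zero e) j

lemma adk_neg (j : ℕ) (x : R) : (adE e)^[j] (-x) = -(adE e)^[j] x := by
  induction j generalizing x with
  | zero => simp
  | succ j ih =>
    rw [Function.iterate_succ_apply, Function.iterate_succ_apply, adE_neg, ih]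

lemma adk_sub (j : ℕ) (x y : R) : (adE e)^[j] (x-y) = (adE e)^[j] x - (adE e)^[j] y := by
  rw [sub_eq_add_neg, adk_add, adk_neg, sub_eq_add_neg]

/-- value of iterated ad on `P12`-type elements -/
lemma adk_A (j : ℕ) (m : R) (h1 : e*m = m) (h2 : m*e = 0) :
    (adE e)^[j] m = ((-1:ℤ)^j) • m := by
  induction j generalizing m with
  | zero => simp
  | succ j ih =>
    rw [Function.iterate_succ_apply]
    have had : adE e m = -m := by rw [adE, h1, h2, zero_sub]
    rw [had, adk_neg, ih m h1 h2, pow_succ]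
    rw [mul_smul, neg_one_zsmul, smul_neg]

lemma adk_B (j : ℕ) (y : R) (h1 : e*y = 0) (h2 : y*e = y) :
    (adE e)^[j] y = y := by
  have : adE e y = y := by rw [adE, h1, h2, sub_zero]
  exact Function.iterate_fixed this j

lemma adE_of_E (s : R) (hs : e*s = s*e) : adE e s = 0 := by
  rw [adE, hs, sub_self]

lemma adk_E (j : ℕ) (s : R) (hs : e*s = s*e) : e * ((adE e)^[j] s) = ((adE e)^[j] s) * e := by
  cases j with
  | zero => simpa using hs
  | succ j =>
    rw [Function.iterate_succ_apply, adE_of_E e s hs, adk_zero]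
    simp

lemma adk_E_succ (j : ℕ) (s : R) (hs : e*s = s*e) : (adE e)^[j+1] s = 0 := by
  rw [Function.iterate_succ_apply, adE_of_E e s hs, adk_zero]

end AdFacts

section AdIter
variable (halt : IsAlt R) (e : R) (he : e*e = e)
include halt he

lemma ad_three (x : R) : adE e (adE e (adE e x)) = adE e x := by
  have h1 : adE e (adE e x) = x*e + e*x - ((e*x)*e + (e*x)*e) := by
    rw [adE, adE, sub_mul, mul_sub, mul_e_e halt e he, e_e_mul halt e he, e_mul_e halt e he]
    abel
  rw [h1, adE_sub, adE_add, adE_add]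
  have h2 : adE e (x*e) = x*e - (e*x)*e := by
    rw [adE, mul_e_e halt e he, e_mul_e halt e he]
  have h3 : adE e (e*x) = (e*x)*e - e*x := by
    rw [adE, e_e_mul halt e he]
  have h4 : adE e ((e*x)*e) = 0 := by
    rw [adE, mul_e_e halt e he]
    have : e*((e*x)*e) = (e*x)*e := by
      rw [← e_mul_e halt e he, e_e_mul halt e he, e_mul_e halt e he]
    rw [this, sub_self]
  rw [h2, h3, h4, adE]
  abel

lemma ad_collapse (j : ℕ) (x : R) : (adE e)^[j+3] x = (adE e)^[j+1] x := by
  have h3 : (adE e)^[3] x = adE e x := by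
    show adE e (adE e (adE e x)) = adE e x
    exact ad_three halt e he x
  rw [Function.iterate_add_apply, h3,
    ← Function.iterate_succ_apply]

lemma ad_reduce : ∀ (j : ℕ) (x : R), (adE e)^[j+1] x = 0 → adE e x = 0 := by
  intro j
  induction j using Nat.strong_induction_on with
  | _ j ih =>
    intro x h
    match j with
    | 0 => simpa using h
    | 1 =>
      have h3 : (adE e)^[3] x = adE e x := by
        have h0 := ad_collapse halt e he 0 x
        simpa using h0
      have h4 : (adE e)^[3] x = adE e ((adE e)^[2] x) :=
        Function.iterate_succ_apply' (adE e) 2 x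
      rw [← h3, h4, h, adE_zero]
    | (j+2) =>
      have hc := ad_collapse halt e he j x
      rw [show j+3 = j+2+1 by omega] at hc
      rw [hc] at h
      exact ih j (by omega) x h

end AdIter

end Stmt3Proof
namespace Stmt3Proof
set_option linter.unusedSectionVars false

variable {R : Type*} [NonUnitalNonAssocRing R]

section Peirce
variable (halt : IsAlt R) (e : R) (he : e*e = e)
include halt he

lemma mul_AA (a b : R) (ha1 : e*a = a) (ha2 : a*e = 0) (hb1 : e*b = b) (hb2 : b*e = 0) :
    e*(a*b) = 0 ∧ (a*b)*e = a*b := by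
  constructor
  · have h := lA halt e a b
    rw [ha1, ha2, zero_mul, hb1] at h
    exact cancel h.symm (by abel)
  · have h := lR halt b e a
    rw [hb2, mul_zero, hb1, ha2, zero_mul] at h
    exact cancel h.symm (by abel)

lemma mul_BB (y y' : R) (hy1 : e*y = 0) (hy2 : y*e = y) (hy'1 : e*y' = 0) (hy'2 : y'*e = y') :
    e*(y*y') = y*y' ∧ (y*y')*e = 0 := by
  constructor
  · have h := lA halt e y y'
    rw [hy1, zero_mul, hy2, hy'1, mul_zero] at h
    exact cancel h.symm (by abel)
  · have h := lR halt y' e y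
    rw [hy'2, hy'1, mul_zero, hy2] at h
    exact cancel h.symm (by abel)

lemma mul_AB (m y : R) (hm1 : e*m = m) (hm2 : m*e = 0) (hy1 : e*y = 0) (hy2 : y*e = y) :
    e*(m*y) = m*y ∧ (m*y)*e = m*y := by
  constructor
  · have h := lA halt e m y
    rw [hm1, hm2, zero_mul, hy1, mul_zero] at h
    exact cancel h.symm (by abel)
  · have h := lR halt y e m
    rw [hy2, hy1, mul_zero, hm2, zero_mul] at h
    exact cancel h.symm (by abel)

lemma mul_BA (y m : R) (hy1 : e*y = 0) (hy2 : y*e = y) (hm1 : e*m = m) (hm2 : m*e = 0) :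
    e*(y*m) = 0 ∧ (y*m)*e = 0 := by
  constructor
  · have h := lA halt e y m
    rw [hy1, zero_mul, hy2, hm1] at h
    exact cancel h.symm (by abel)
  · have h := lR halt m e y
    rw [hm2, mul_zero, hm1, hy2] at h
    exact cancel h.symm (by abel)

lemma mul_B_R11 (y h : R) (hy1 : e*y = 0) (hy2 : y*e = y) (hh1 : e*h = h) (hh2 : h*e = h) :
    e*(y*h) = 0 ∧ (y*h)*e = y*h := by
  constructor
  · have h0 := lA halt e y h
    rw [hy1, zero_mul, hy2, hh1] at h0
    exact cancel h0.symm (by abel)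
  · have h0 := lR halt h e y
    rw [hh2, hh1, hy2] at h0
    exact cancel h0.symm (by abel)

lemma mul_R22_B (w y : R) (hw1 : e*w = 0) (hw2 : w*e = 0) (hy1 : e*y = 0) (hy2 : y*e = y) :
    e*(w*y) = 0 ∧ (w*y)*e = w*y := by
  constructor
  · have h := lA halt e w y
    rw [hw1, zero_mul, hw2, zero_mul, hy1, mul_zero] at h
    exact cancel h.symm (by abel)
  · have h := lR halt y e w
    rw [hy2, hy1, mul_zero, hw2, zero_mul] at h
    exact cancel h.symm (by abel)

lemma mul_B_R22 (y w : R) (hy1 : e*y = 0) (hy2 : y*e = y) (hw1 : e*w = 0) (hw2 : w*e = 0) :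
    e*(y*w) = (y*w)*e := by
  have h1 : e*(y*w) = y*w := by
    have h := lA halt e y w
    rw [hy1, zero_mul, hy2, hw1, mul_zero] at h
    exact cancel h.symm (by abel)
  have h2 : (y*w)*e = -(y*w) := by
    have h := lR halt w e y
    rw [hw2, hw1, mul_zero, hy2, add_zero] at h
    exact eq_neg_of_add_eq_zero_left h.symm
  have h3 := mul_e_e halt e he (y*w)
  rw [h2, neg_mul, h2, neg_neg] at h3
  rw [h1, h2, ← h3]

lemma mul_R11_B (h y : R) (hh1 : e*h = h) (hh2 : h*e = h) (hy1 : e*y = 0) (hy2 : y*e = y) :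
    e*(h*y) = (h*y)*e := by
  have hE : e*(h*y) = h*y + h*y := by
    have h0 := lA halt e h y
    rw [hh1, hh2, hy1, mul_zero] at h0
    exact cancel h0.symm (by abel)
  have htors : h*y + h*y = 0 := by
    have h2 := e_e_mul halt e he (h*y)
    rw [hE, mul_add, hE] at h2
    exact cancel h2 (by abel)
  have h3 : (h*y)*e = 0 := by
    have h0 := lR halt y e h
    rw [hy2, hy1, mul_zero, hh2] at h0
    exact cancel h0.symm (by abel)
  rw [hE, h3, htors]

lemma mul_R11_A (h m : R) (hh1 : e*h = h) (hh2 : h*e = h) (hm1 : e*m = m) (hm2 : m*e = 0) :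
    e*(h*m) = h*m ∧ (h*m)*e = 0 := by
  constructor
  · have h0 := lA halt e h m
    rw [hh1, hh2, hm1] at h0
    exact cancel h0.symm (by abel)
  · have h0 := lR halt m e h
    rw [hm2, mul_zero, hm1, hh2] at h0
    exact cancel h0.symm (by abel)

lemma mul_A_R22 (m w : R) (hm1 : e*m = m) (hm2 : m*e = 0) (hw1 : e*w = 0) (hw2 : w*e = 0) :
    e*(m*w) = m*w ∧ (m*w)*e = 0 := by
  constructor
  · have h := lA halt e m w
    rw [hm1, hm2, zero_mul, hw1, mul_zero] at h
    exact cancel h.symm (by abel)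
  · have h := lR halt w e m
    rw [hw2, hw1, mul_zero, hm2, zero_mul] at h
    exact cancel h.symm (by abel)

lemma mul_A_R11 (m h : R) (hm1 : e*m = m) (hm2 : m*e = 0) (hh1 : e*h = h) (hh2 : h*e = h) :
    e*(m*h) = (m*h)*e := by
  have hz : e*(m*h) = 0 := by
    have h0 := lA halt e m h
    rw [hm1, hm2, zero_mul, hh1] at h0
    exact cancel h0.symm (by abel)
  have hE : (m*h)*e = m*h + m*h := by
    have h0 := lR halt h e m
    rw [hh2, hh1, hm2, zero_mul] at h0
    exact cancel h0.symm (by abel)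
  have htors : m*h + m*h = 0 := by
    have h3 := mul_e_e halt e he (m*h)
    rw [hE, add_mul, hE] at h3
    exact cancel h3 (by abel)
  rw [hz, hE, htors]

lemma mul_R22_A (w m : R) (hw1 : e*w = 0) (hw2 : w*e = 0) (hm1 : e*m = m) (hm2 : m*e = 0) :
    e*(w*m) = (w*m)*e := by
  have h1 : e*(w*m) = -(w*m) := by
    have h := lA halt e w m
    rw [hw1, zero_mul, hw2, zero_mul, hm1, add_zero] at h
    exact eq_neg_of_add_eq_zero_left h.symm
  have h2 : (w*m)*e = w*m := by
    have h := lR halt m e w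
    rw [hm2, mul_zero, hm1, hw2, zero_mul] at h
    exact cancel h.symm (by abel)
  have h3 := e_e_mul halt e he (w*m)
  rw [h1, mul_neg, h1, neg_neg] at h3
  rw [h1, h2]
  exact h3.symm

lemma es_e (t : R) (ht : e*t = t*e) : (e*t)*e = e*t := by
  rw [← e_mul_e halt e he t, ← ht, e_e_mul halt e he]

end Peirce
end Stmt3Proof
namespace Stmt3Proof
set_option linter.unusedSectionVars false

variable {R : Type*} [NonUnitalNonAssocRing R]

lemma pn_succ (m : ℕ) (x : Fin (m+2) → R) :
    pn (m+2) x = pn (m+1) (fun i => x i.castSucc) * x (Fin.last (m+1))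
      - x (Fin.last (m+1)) * pn (m+1) (fun i => x i.castSucc) := rfl

lemma pn_update_add : ∀ (m : ℕ) (x : Fin m → R) (j : Fin m) (a b : R),
    pn m (Function.update x j (a+b)) =
      pn m (Function.update x j a) + pn m (Function.update x j b) := by
  intro m
  induction m with
  | zero => intro x j a b; exact j.elim0
  | succ m ih =>
    match m with
    | 0 =>
      intro x j a b
      have hj : j = 0 := by
        have := j.isLt
        exact Fin.ext (by omega)
      subst hj
      show (Function.update x 0 (a+b)) 0 = (Function.update x 0 a) 0 + (Function.update x 0 b) 0
      simp
    | (m'+1) =>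
      intro x j a b
      induction j using Fin.lastCases with
      | last =>
        have hfront : ∀ c : R,
            (fun i : Fin (m'+1) => (Function.update x (Fin.last (m'+1)) c) i.castSucc)
              = (fun i => x i.castSucc) := by
          intro c; funext i
          exact Function.update_of_ne (Fin.castSucc_lt_last i).ne c x
        rw [pn_succ, pn_succ, pn_succ, hfront, hfront, hfront,
          Function.update_self, Function.update_self, Function.update_self]
        rw [mul_add, add_mul]; abel
      | cast j' =>
        have hlast : ∀ c : R,
            (Function.update x j'.castSucc c) (Fin.last (m'+1)) = x (Fin.last (m'+1)) := by
          intro c; exact Function.update_of_ne (Fin.castSucc_lt_last j').ne' c x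
        have hfront : ∀ c : R,
            (fun i : Fin (m'+1) => (Function.update x j'.castSucc c) i.castSucc)
              = Function.update (fun i : Fin (m'+1) => x i.castSucc) j' c := by
          intro c; funext i
          by_cases hij : i = j'
          · subst hij; rw [Function.update_self, Function.update_self]
          · rw [Function.update_of_ne (fun hc => hij (Fin.castSucc_injective _ hc)) c x,
              Function.update_of_ne hij]
        rw [pn_succ, pn_succ, pn_succ, hlast, hlast, hlast, hfront, hfront, hfront,
          ih _ j' a b]
        rw [add_mul, mul_add]; abel

lemma pn_update_zero (m : ℕ) (x : Fin m → R) (j : Fin m) :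
    pn m (Function.update x j 0) = 0 := by
  have h := pn_update_add m x j 0 0
  simp only [add_zero] at h
  exact right_eq_add.mp h

lemma pn_zero_slot (m : ℕ) (x : Fin m → R) (j : Fin m) (h : x j = 0) :
    pn m x = 0 := by
  have : x = Function.update x j 0 := by
    rw [← h, Function.update_eq_self]
  rw [this, pn_update_zero]

/-- the tuple (u, v, e, e, ..., e) of length k+2 -/
def Tup (k : ℕ) (e u v : R) : Fin (k+2) → R :=
  fun i => if i.val = 0 then u else if i.val = 1 then v else e

lemma Tup_zero (k : ℕ) (e u v : R) : Tup k e u v 0 = u := by simp [Tup]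

lemma Tup_one (k : ℕ) (e u v : R) : Tup k e u v 1 = v := by simp [Tup]

lemma Tup_ge (k : ℕ) (e u v : R) (i : Fin (k+2)) (hi : 2 ≤ i.val) : Tup k e u v i = e := by
  simp only [Tup]
  rw [if_neg (by omega), if_neg (by omega)]

lemma pn_Tup : ∀ (k : ℕ) (e u v : R), pn (k+2) (Tup k e u v) = (adE e)^[k] (u*v - v*u) := by
  intro k
  induction k with
  | zero =>
    intro e u v
    show pn 2 (Tup 0 e u v) = u*v - v*u
    rw [pn_succ 0]
    have h1 : (fun i : Fin 1 => Tup 0 e u v i.castSucc) = fun _ => u := by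
      funext i
      have : i = 0 := Subsingleton.elim _ _
      subst this
      rfl
    have h2 : Tup 0 e u v (Fin.last 1) = v := rfl
    rw [h1, h2]
    rfl
  | succ k ihk =>
    intro e u v
    rw [pn_succ (k+1)]
    have hfront : (fun i : Fin (k+2) => Tup (k+1) e u v i.castSucc) = Tup k e u v := by
      funext i
      simp only [Tup, Fin.coe_castSucc]
    have hlast : Tup (k+1) e u v (Fin.last (k+2)) = e := by
      apply Tup_ge
      simp [Fin.val_last]
    rw [hfront, hlast, ihk, Function.iterate_succ_apply']
    rfl

lemma upd_Tup0 (k : ℕ) (e u v w : R) :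
    Function.update (Tup k e u v) 0 w = Tup k e w v := by
  funext i
  by_cases h : i = (0 : Fin (k+2))
  · subst h; rw [Function.update_self, Tup_zero]
  · rw [Function.update_of_ne h]
    have hv : i.val ≠ 0 := fun hc => h (Fin.ext (by simp [hc]))
    simp only [Tup, if_neg hv]

lemma upd_Tup1 (k : ℕ) (e u v w : R) :
    Function.update (Tup k e u v) 1 w = Tup k e u w := by
  funext i
  by_cases h : i = (1 : Fin (k+2))
  · subst h; rw [Function.update_self, Tup_one]
  · rw [Function.update_of_ne h]
    have hv : i.val ≠ 1 := by simpa [Fin.ext_iff] using h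
    simp only [Tup, if_neg hv]

def Srest (k : ℕ) : Finset (Fin (k+2)) := Finset.univ.filter (fun i => 2 ≤ i.val)

lemma univ_split (k : ℕ) :
    (Finset.univ : Finset (Fin (k+2))) = insert 0 (insert 1 (Srest k)) := by
  ext i
  simp only [Finset.mem_univ, true_iff, Finset.mem_insert, Srest, Finset.mem_filter, true_and,
    Fin.ext_iff, Fin.val_zero, Fin.val_one]
  omega

lemma zero_notin (k : ℕ) : (0 : Fin (k+2)) ∉ insert 1 (Srest k) := by
  simp [Srest, Fin.ext_iff]

lemma one_notin (k : ℕ) : (1 : Fin (k+2)) ∉ Srest k := by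
  simp [Srest]

end Stmt3Proof
namespace Stmt3Proof
set_option linter.unusedSectionVars false

variable {R : Type*} [NonUnitalNonAssocRing R]

/-- The additivity defect of `D`. -/
def Del (D : R → R) (u v : R) : R := D (u+v) - D u - D v

/-- `Aop e k u v = ad^[k] [u,v]`. -/
def Aop (e : R) (k : ℕ) (u v : R) : R := (adE e)^[k] (u*v - v*u)

lemma Del_symm (D : R → R) (u v : R) : Del D u v = Del D v u := by
  simp only [Del, add_comm]; abel

section FTwo
variable (e : R) (D : R → R) (k : ℕ)

lemma Aop_add1 (u u' v : R) : Aop e k (u+u') v = Aop e k u v + Aop e k u' v := by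
  have h : (u+u')*v - v*(u+u') = (u*v - v*u) + (u'*v - v*u') := by
    rw [add_mul, mul_add]; abel
  rw [Aop, h, adk_add]; rfl

lemma Aop_add2 (u v v' : R) : Aop e k u (v+v') = Aop e k u v + Aop e k u v' := by
  have h : u*(v+v') - (v+v')*u = (u*v - v*u) + (u*v' - v'*u) := by
    rw [add_mul, mul_add]; abel
  rw [Aop, h, adk_add]; rfl

lemma Aop_sub1 (u u' v : R) : Aop e k (u-u') v = Aop e k u v - Aop e k u' v := by
  have h : (u-u')*v - v*(u-u') = (u*v - v*u) - (u'*v - v*u') := by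
    rw [sub_mul, mul_sub]; abel
  rw [Aop, h, adk_sub]; rfl

lemma Aop_sub2 (u v v' : R) : Aop e k u (v-v') = Aop e k u v - Aop e k u v' := by
  have h : u*(v-v') - (v-v')*u = (u*v - v*u) - (u*v' - v'*u) := by
    rw [sub_mul, mul_sub]; abel
  rw [Aop, h, adk_sub]; rfl

variable (hD : IsMultLieNDeriv (k+2) D)
include hD

lemma hD_inst (u v : R) :
    D (Aop e k u v) = Aop e k (D u) v + Aop e k u (D v)
      + ∑ i ∈ Srest k, pn (k+2) (Function.update (Tup k e u v) i (D e)) := by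
  have h := hD (Tup k e u v)
  rw [pn_Tup] at h
  rw [univ_split k, Finset.sum_insert (zero_notin k), Finset.sum_insert (one_notin k)] at h
  rw [Tup_zero, Tup_one, upd_Tup0, upd_Tup1, pn_Tup, pn_Tup] at h
  have hsum : ∑ i ∈ Srest k, pn (k+2) (Function.update (Tup k e u v) i (D (Tup k e u v i)))
      = ∑ i ∈ Srest k, pn (k+2) (Function.update (Tup k e u v) i (D e)) := by
    refine Finset.sum_congr rfl (fun i hi => ?_)
    rw [Tup_ge k e u v i (Finset.mem_filter.mp hi).2]
  rw [hsum] at h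
  simp only [Aop]
  rw [h, ← add_assoc]

lemma Phi_add1 (u u' v : R) :
    (∑ i ∈ Srest k, pn (k+2) (Function.update (Tup k e (u+u') v) i (D e)))
      = (∑ i ∈ Srest k, pn (k+2) (Function.update (Tup k e u v) i (D e)))
        + ∑ i ∈ Srest k, pn (k+2) (Function.update (Tup k e u' v) i (D e)) := by
  rw [← Finset.sum_add_distrib]
  refine Finset.sum_congr rfl (fun i hi => ?_)
  have hi2 : 2 ≤ i.val := (Finset.mem_filter.mp hi).2
  have hne0 : (0 : Fin (k+2)) ≠ i := by
    intro hc
    rw [← hc] at hi2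
    simp at hi2
  have hT : ∀ z : R, Tup k e z v = Function.update (Tup k e 0 v) 0 z := by
    intro z; rw [upd_Tup0]
  rw [hT (u+u'), hT u, hT u',
    Function.update_comm hne0, Function.update_comm hne0,
    Function.update_comm hne0]
  exact pn_update_add _ _ 0 u u'

lemma Phi_add2 (u v v' : R) :
    (∑ i ∈ Srest k, pn (k+2) (Function.update (Tup k e u (v+v')) i (D e)))
      = (∑ i ∈ Srest k, pn (k+2) (Function.update (Tup k e u v) i (D e)))
        + ∑ i ∈ Srest k, pn (k+2) (Function.update (Tup k e u v') i (D e)) := by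
  rw [← Finset.sum_add_distrib]
  refine Finset.sum_congr rfl (fun i hi => ?_)
  have hi2 : 2 ≤ i.val := (Finset.mem_filter.mp hi).2
  have hne1 : (1 : Fin (k+2)) ≠ i := by
    intro hc
    rw [← hc] at hi2
    simp [Fin.val_one] at hi2
  have hT : ∀ z : R, Tup k e u z = Function.update (Tup k e u 0) 1 z := by
    intro z; rw [upd_Tup1]
  rw [hT (v+v'), hT v, hT v',
    Function.update_comm hne1, Function.update_comm hne1,
    Function.update_comm hne1]
  exact pn_update_add _ _ 1 v v'

lemma F2_1 (u u' v : R) :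
    Del D (Aop e k u v) (Aop e k u' v) = Aop e k (Del D u u') v := by
  have h1 := hD_inst e D k hD (u+u') v
  have h2 := hD_inst e D k hD u v
  have h3 := hD_inst e D k hD u' v
  have hD2 : Del D (Aop e k u v) (Aop e k u' v)
      = D (Aop e k (u+u') v) - D (Aop e k u v) - D (Aop e k u' v) := by
    rw [Del, ← Aop_add1]
  rw [hD2, h1, h2, h3, Aop_add1, Phi_add1 e D k hD]
  have hR : Aop e k (Del D u u') v
      = Aop e k (D (u+u')) v - Aop e k (D u) v - Aop e k (D u') v := by
    rw [Del, Aop_sub1, Aop_sub1]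
  rw [hR]
  abel

lemma F2_2 (u v v' : R) :
    Del D (Aop e k u v) (Aop e k u v') = Aop e k u (Del D v v') := by
  have h1 := hD_inst e D k hD u (v+v')
  have h2 := hD_inst e D k hD u v
  have h3 := hD_inst e D k hD u v'
  have hD2 : Del D (Aop e k u v) (Aop e k u v')
      = D (Aop e k u (v+v')) - D (Aop e k u v) - D (Aop e k u v') := by
    rw [Del, ← Aop_add2]
  rw [hD2, h1, h2, h3, Aop_add2, Phi_add2 e D k hD]
  have hR : Aop e k u (Del D v v')
      = Aop e k u (D (v+v')) - Aop e k u (D v) - Aop e k u (D v') := by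
    rw [Del, Aop_sub2, Aop_sub2]
  rw [hR]
  abel

lemma D_zero : D 0 = 0 := by
  have h := hD (fun _ : Fin (k+2) => (0:R))
  have hz : pn (k+2) (fun _ : Fin (k+2) => (0:R)) = 0 := pn_zero_slot _ _ 0 rfl
  rw [hz] at h
  have hterm : ∀ i : Fin (k+2),
      pn (k+2) (Function.update (fun _ : Fin (k+2) => (0:R)) i (D ((fun _ : Fin (k+2) => (0:R)) i))) = 0 := by
    intro i
    by_cases hi : i = 0
    · subst hi
      refine pn_zero_slot _ _ 1 ?_
      rw [Function.update_of_ne (by simp [Fin.ext_iff])]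
    · refine pn_zero_slot _ _ 0 ?_
      rw [Function.update_of_ne (Ne.symm hi)]
  rw [Finset.sum_congr rfl (fun i _ => hterm i)] at h
  simpa using h

lemma Del_zero_right (u : R) : Del D u 0 = 0 := by
  rw [Del, add_zero, D_zero D k hD]
  abel

lemma Del_zero_left (u : R) : Del D 0 u = 0 := by
  rw [Del_symm, Del_zero_right D k hD]

/-- Peel off an extra summand: `Δ(u, v+t) = Δ(u,v) + Δ(u+v,t) - Δ(v,t)`. -/
lemma Del_peel (u v t : R) :
    Del D u (v + t) = Del D u v + Del D (u+v) t - Del D v t := by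
  simp only [Del]
  rw [← add_assoc]
  abel

end FTwo
end Stmt3Proof
namespace Stmt3Proof
set_option linter.unusedSectionVars false

variable {R : Type*} [NonUnitalNonAssocRing R]

lemma nu_invol (j : ℕ) (x : R) : ((-1:ℤ)^j) • (((-1:ℤ)^j) • x) = x := by
  rw [smul_smul, ← pow_add]
  have h : Even (j + j) := ⟨j, rfl⟩
  rw [h.neg_one_pow, one_smul]

lemma nu_cases (j : ℕ) (x : R) : ((-1:ℤ)^j) • x = x ∨ ((-1:ℤ)^j) • x = -x := by
  rcases Nat.even_or_odd j with h | h
  · left; rw [h.neg_one_pow, one_smul]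
  · right; rw [h.neg_one_pow, neg_one_zsmul]

lemma nu_A (e : R) (j : ℕ) (x : R) (h1 : e*x = x) (h2 : x*e = 0) :
    e*(((-1:ℤ)^j) • x) = ((-1:ℤ)^j) • x ∧ (((-1:ℤ)^j) • x)*e = 0 := by
  rcases nu_cases j x with h | h <;> rw [h] <;>
    exact ⟨by simp [mul_neg, h1], by simp [neg_mul, h2]⟩

lemma nu_B (e : R) (j : ℕ) (x : R) (h1 : e*x = 0) (h2 : x*e = x) :
    e*(((-1:ℤ)^j) • x) = 0 ∧ (((-1:ℤ)^j) • x)*e = ((-1:ℤ)^j) • x := by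
  rcases nu_cases j x with h | h <;> rw [h] <;>
    exact ⟨by simp [mul_neg, h1], by simp [neg_mul, h2]⟩


lemma Ecomm_sub {e a b : R} (ha : e*a = a*e) (hb : e*b = b*e) : e*(a-b) = (a-b)*e := by
  rw [mul_sub, sub_mul, ha, hb]

lemma Ecomm_add {e a b : R} (ha : e*a = a*e) (hb : e*b = b*e) : e*(a+b) = (a+b)*e := by
  rw [mul_add, add_mul, ha, hb]

lemma Bsub {e a b : R} (ha1 : e*a = 0) (ha2 : a*e = a) (hb1 : e*b = 0) (hb2 : b*e = b) :
    e*(a-b) = 0 ∧ (a-b)*e = a-b :=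
  ⟨by rw [mul_sub, ha1, hb1, sub_self], by rw [sub_mul, ha2, hb2]⟩

lemma Asub {e a b : R} (ha1 : e*a = a) (ha2 : a*e = 0) (hb1 : e*b = b) (hb2 : b*e = 0) :
    e*(a-b) = a-b ∧ (a-b)*e = 0 :=
  ⟨by rw [mul_sub, ha1, hb1], by rw [sub_mul, ha2, hb2, sub_self]⟩

section Claims
variable (halt : IsAlt R) (e : R) (he : e*e = e)
variable (D : R → R) (k : ℕ) (hD : IsMultLieNDeriv (k+2) D)
include halt he hD

lemma E1 (u t : R) (ht : e*t = t*e) : e * Del D u t = (Del D u t) * e := by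
  have h := F2_1 e D k hD u t e
  have hA : Aop e k t e = 0 := by
    rw [Aop, ← ht, sub_self, adk_zero]
  rw [hA, Del_zero_right D k hD] at h
  have h2 : (adE e)^[k+1] (Del D u t) = 0 := by
    rw [Function.iterate_succ_apply]
    simpa [Aop, adE] using h.symm
  have h3 := ad_reduce halt e he k (Del D u t) h2
  rw [adE] at h3
  exact (sub_eq_zero.mp h3).symm

lemma E1' (u t : R) (ht : e*t = t*e) : e * Del D t u = (Del D t u) * e := by
  rw [Del_symm]
  exact E1 halt e he D k hD u t ht

lemma CM1 (m y : R) (hm1 : e*m = m) (hm2 : m*e = 0) (hy1 : e*y = 0) (hy2 : y*e = y) :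
    ∃ β t : R, (e*β = 0 ∧ β*e = β) ∧ (e*t = t*e) ∧
      Del D y (((-1:ℤ)^k) • m) = β + t := by
  set Θ := Del D e m with hTdef
  have hT : e*Θ = Θ*e := E1' halt e he D k hD m e rfl
  have key := F2_2 e D k hD (e+y) e m
  have c1 : Aop e k (e+y) e = y := by
    have hC : (e+y)*e - e*(e+y) = y := by
      rw [add_mul, mul_add, he, hy1, hy2]; abel
    rw [Aop, hC, adk_B e k y hy1 hy2]
  have c2 : Aop e k (e+y) m = (((-1:ℤ)^k) • m) + (adE e)^[k] (y*m - m*y) := by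
    have hC : (e+y)*m - m*(e+y) = m + (y*m - m*y) := by
      rw [add_mul, mul_add, hm1, hm2]; abel
    rw [Aop, hC, adk_add, adk_A e k m hm1 hm2]
  have hym := mul_BA halt e he y m hy1 hy2 hm1 hm2
  have hmy := mul_AB halt e he m y hm1 hm2 hy1 hy2
  have hs0 : e*(y*m - m*y) = (y*m - m*y)*e := by
    rw [mul_sub, sub_mul, hym.1, hym.2, hmy.1, hmy.2]
  have ht0 : e*((adE e)^[k] (y*m - m*y)) = ((adE e)^[k] (y*m - m*y))*e :=
    adk_E e k _ hs0
  -- decompose Θ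
  have hh1a : e*(e*Θ) = e*Θ := e_e_mul halt e he Θ
  have hh1b : (e*Θ)*e = e*Θ := es_e halt e he Θ hT
  have hw1a : e*(Θ - e*Θ) = 0 := by rw [mul_sub, hh1a, sub_self]
  have hw1b : (Θ - e*Θ)*e = 0 := by rw [sub_mul, hh1b, ← hT, sub_self]
  have hβ1 := mul_B_R11 halt e he y (e*Θ) hy1 hy2 hh1a hh1b
  have hβ2 := mul_R22_B halt e he (Θ - e*Θ) y hw1a hw1b hy1 hy2
  have hs1a := mul_B_R22 halt e he y (Θ - e*Θ) hy1 hy2 hw1a hw1b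
  have hs1b := mul_R11_B halt e he (e*Θ) y hh1a hh1b hy1 hy2
  have hβB : e*(y*(e*Θ) - (Θ - e*Θ)*y) = 0 ∧ (y*(e*Θ) - (Θ - e*Θ)*y)*e = y*(e*Θ) - (Θ - e*Θ)*y :=
    Bsub hβ1.1 hβ1.2 hβ2.1 hβ2.2
  have hs1E : e*(y*(Θ - e*Θ) - (e*Θ)*y) = (y*(Θ - e*Θ) - (e*Θ)*y)*e :=
    Ecomm_sub hs1a hs1b
  have c3 : Aop e k (e+y) Θ = (y*(e*Θ) - (Θ - e*Θ)*y) + (adE e)^[k] (y*(Θ - e*Θ) - (e*Θ)*y) := by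
    have hC : (e+y)*Θ - Θ*(e+y)
        = (y*(e*Θ) - (Θ - e*Θ)*y) + (y*(Θ - e*Θ) - (e*Θ)*y) := by
      have hsplit : y*Θ - Θ*y = (y*(e*Θ) - (Θ - e*Θ)*y) + (y*(Θ - e*Θ) - (e*Θ)*y) := by
        have hy' : y*Θ = y*(e*Θ) + y*(Θ - e*Θ) := by
          rw [← mul_add]
          congr 1
          abel
        have hy'' : Θ*y = (e*Θ)*y + (Θ - e*Θ)*y := by
          rw [← add_mul]
          congr 1
          abel
        rw [hy', hy'']
        abel
      have h0 : (e+y)*Θ - Θ*(e+y) = (e*Θ - Θ*e) + (y*Θ - Θ*y) := by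
        rw [add_mul, mul_add]; abel
      rw [h0, show e*Θ - Θ*e = 0 from by rw [hT, sub_self], zero_add]
      exact hsplit
    rw [Aop, hC, adk_add]
    congr 1
    exact adk_B e k _ hβB.1 hβB.2
  rw [c1, c2, c3] at key
  rw [Del_peel D k hD y _ _] at key
  refine ⟨y*(e*Θ) - (Θ - e*Θ)*y,
    (adE e)^[k] (y*(Θ - e*Θ) - (e*Θ)*y)
      - Del D (y + ((-1:ℤ)^k) • m) ((adE e)^[k] (y*m - m*y))
      + Del D (((-1:ℤ)^k) • m) ((adE e)^[k] (y*m - m*y)), hβB, ?_, ?_⟩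
  · -- e-commuting of the t-part
    have hA := adk_E e k _ hs0
    have hB := E1 halt e he D k hD (y + ((-1:ℤ)^k) • m) _ hA
    have hC2 := E1 halt e he D k hD (((-1:ℤ)^k) • m) _ hA
    have hD2 := adk_E e k (y*(Θ - e*Θ) - (e*Θ)*y) hs1E
    exact Ecomm_add (Ecomm_sub hD2 hB) hC2
  · -- the equation
    exact cancel key (by abel)

lemma CM2 (m y : R) (hm1 : e*m = m) (hm2 : m*e = 0) (hy1 : e*y = 0) (hy2 : y*e = y) :
    ∃ α t : R, (e*α = α ∧ α*e = 0) ∧ (e*t = t*e) ∧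
      Del D (((-1:ℤ)^k) • (-m)) (-y) = α + t := by
  set Ξ := Del D e y with hXdef
  have hX : e*Ξ = Ξ*e := E1' halt e he D k hD y e rfl
  have key := F2_2 e D k hD (e+m) e y
  have hm1' : e*(-m) = -m := by rw [mul_neg, hm1]
  have hm2' : (-m)*e = 0 := by rw [neg_mul, hm2, neg_zero]
  have c1 : Aop e k (e+m) e = ((-1:ℤ)^k) • (-m) := by
    have hC : (e+m)*e - e*(e+m) = -m := by
      rw [add_mul, mul_add, he, hm1, hm2]; abel
    rw [Aop, hC, adk_A e k (-m) hm1' hm2']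
  have c2 : Aop e k (e+m) y = (-y) + (adE e)^[k] (m*y - y*m) := by
    have hC : (e+m)*y - y*(e+m) = (-y) + (m*y - y*m) := by
      rw [add_mul, mul_add, hy1, hy2]; abel
    have hny : (adE e)^[k] (-y) = -y := by
      apply adk_B
      · rw [mul_neg, hy1, neg_zero]
      · rw [neg_mul, hy2]
    rw [Aop, hC, adk_add, hny]
  have hmy := mul_AB halt e he m y hm1 hm2 hy1 hy2
  have hym := mul_BA halt e he y m hy1 hy2 hm1 hm2
  have hs0 : e*(m*y - y*m) = (m*y - y*m)*e := by
    rw [mul_sub, sub_mul, hmy.1, hmy.2, hym.1, hym.2]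
  -- decompose Ξ
  have hh2a : e*(e*Ξ) = e*Ξ := e_e_mul halt e he Ξ
  have hh2b : (e*Ξ)*e = e*Ξ := es_e halt e he Ξ hX
  have hw2a : e*(Ξ - e*Ξ) = 0 := by rw [mul_sub, hh2a, sub_self]
  have hw2b : (Ξ - e*Ξ)*e = 0 := by rw [sub_mul, hh2b, ← hX, sub_self]
  have hα1 := mul_A_R22 halt e he m (Ξ - e*Ξ) hm1 hm2 hw2a hw2b
  have hα2 := mul_R11_A halt e he (e*Ξ) m hh2a hh2b hm1 hm2
  have hs2a := mul_A_R11 halt e he m (e*Ξ) hm1 hm2 hh2a hh2b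
  have hs2b := mul_R22_A halt e he (Ξ - e*Ξ) m hw2a hw2b hm1 hm2
  have hαA : e*(m*(Ξ - e*Ξ) - (e*Ξ)*m) = m*(Ξ - e*Ξ) - (e*Ξ)*m
      ∧ (m*(Ξ - e*Ξ) - (e*Ξ)*m)*e = 0 :=
    Asub hα1.1 hα1.2 hα2.1 hα2.2
  have hs2E : e*(m*(e*Ξ) - (Ξ - e*Ξ)*m) = (m*(e*Ξ) - (Ξ - e*Ξ)*m)*e :=
    Ecomm_sub hs2a hs2b
  have c3 : Aop e k (e+m) Ξ
      = (((-1:ℤ)^k) • (m*(Ξ - e*Ξ) - (e*Ξ)*m)) + (adE e)^[k] (m*(e*Ξ) - (Ξ - e*Ξ)*m) := by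
    have hC : (e+m)*Ξ - Ξ*(e+m)
        = (m*(Ξ - e*Ξ) - (e*Ξ)*m) + (m*(e*Ξ) - (Ξ - e*Ξ)*m) := by
      have hm' : m*Ξ = m*(e*Ξ) + m*(Ξ - e*Ξ) := by
        rw [← mul_add]
        congr 1
        abel
      have hm'' : Ξ*m = (e*Ξ)*m + (Ξ - e*Ξ)*m := by
        rw [← add_mul]
        congr 1
        abel
      have h0 : (e+m)*Ξ - Ξ*(e+m) = (e*Ξ - Ξ*e) + (m*Ξ - Ξ*m) := by
        rw [add_mul, mul_add]; abel
      have hsplit : m*Ξ - Ξ*m = (m*(Ξ - e*Ξ) - (e*Ξ)*m) + (m*(e*Ξ) - (Ξ - e*Ξ)*m) := by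
        rw [hm', hm'']; abel
      rw [h0, show e*Ξ - Ξ*e = 0 from by rw [hX, sub_self], zero_add]
      exact hsplit
    rw [Aop, hC, adk_add]
    congr 1
    exact adk_A e k _ hαA.1 hαA.2
  rw [c1, c2, c3] at key
  rw [Del_peel D k hD _ _ _] at key
  refine ⟨((-1:ℤ)^k) • (m*(Ξ - e*Ξ) - (e*Ξ)*m),
    (adE e)^[k] (m*(e*Ξ) - (Ξ - e*Ξ)*m)
      - Del D ((((-1:ℤ)^k) • (-m)) + (-y)) ((adE e)^[k] (m*y - y*m))
      + Del D (-y) ((adE e)^[k] (m*y - y*m)),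
    nu_A e k _ hαA.1 hαA.2, ?_, ?_⟩
  · have hA := adk_E e k _ hs0
    have hB := E1 halt e he D k hD ((((-1:ℤ)^k) • (-m)) + (-y)) _ hA
    have hC2 := E1 halt e he D k hD (-y) _ hA
    have hD2 := adk_E e k (m*(e*Ξ) - (Ξ - e*Ξ)*m) hs2E
    exact Ecomm_add (Ecomm_sub hD2 hB) hC2
  · exact cancel key (by abel)

end Claims
end Stmt3Proof
namespace Stmt3Proof
set_option linter.unusedSectionVars false

variable {R : Type*} [NonUnitalNonAssocRing R]

section Claims2
variable (halt : IsAlt R) (e : R) (he : e*e = e)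
variable (D : R → R) (k : ℕ) (hD : IsMultLieNDeriv (k+2) D)
include halt he hD

/-- every mixed defect lies in `B ⊕ E` -/
lemma CM1' (m y : R) (hm1 : e*m = m) (hm2 : m*e = 0) (hy1 : e*y = 0) (hy2 : y*e = y) :
    ∃ β t : R, (e*β = 0 ∧ β*e = β) ∧ (e*t = t*e) ∧ Del D m y = β + t := by
  have hm' := nu_A e k m hm1 hm2
  obtain ⟨β, t, hβ, ht, hEq⟩ :=
    CM1 halt e he D k hD (((-1:ℤ)^k) • m) y hm'.1 hm'.2 hy1 hy2
  rw [nu_invol] at hEq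
  exact ⟨β, t, hβ, ht, by rw [Del_symm]; exact hEq⟩

/-- every mixed defect lies in `A ⊕ E` -/
lemma CM2' (m y : R) (hm1 : e*m = m) (hm2 : m*e = 0) (hy1 : e*y = 0) (hy2 : y*e = y) :
    ∃ α t : R, (e*α = α ∧ α*e = 0) ∧ (e*t = t*e) ∧ Del D m y = α + t := by
  have hm'1 : e*(-(((-1:ℤ)^k) • m)) = -(((-1:ℤ)^k) • m) := by
    rw [mul_neg, (nu_A e k m hm1 hm2).1]
  have hm'2 : (-(((-1:ℤ)^k) • m))*e = 0 := by
    rw [neg_mul, (nu_A e k m hm1 hm2).2, neg_zero]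
  have hy'1 : e*(-y) = 0 := by rw [mul_neg, hy1, neg_zero]
  have hy'2 : (-y)*e = -y := by rw [neg_mul, hy2]
  obtain ⟨α, t, hα, ht, hEq⟩ :=
    CM2 halt e he D k hD (-(((-1:ℤ)^k) • m)) (-y) hm'1 hm'2 hy'1 hy'2
  rw [neg_neg, nu_invol, neg_neg] at hEq
  exact ⟨α, t, hα, ht, hEq⟩

lemma mixed_E (m y : R) (hm1 : e*m = m) (hm2 : m*e = 0) (hy1 : e*y = 0) (hy2 : y*e = y) :
    e * Del D m y = Del D m y * e := by
  obtain ⟨α, t, hα, ht, h1⟩ := CM2' halt e he D k hD m y hm1 hm2 hy1 hy2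
  obtain ⟨β, t', hβ, ht', h2⟩ := CM1' halt e he D k hD m y hm1 hm2 hy1 hy2
  have e1 : e*(α + t) - (e*(α + t))*e = α := by
    rw [mul_add, hα.1, add_mul, hα.2, es_e halt e he t ht]
    abel
  have e2 : e*(β + t') - (e*(β + t'))*e = 0 := by
    rw [mul_add, hβ.1, zero_add, es_e halt e he t' ht', sub_self]
  rw [← h1, h2] at e1
  have hα0 : α = 0 := e1.symm.trans e2
  rw [hα0, zero_add] at h1
  rw [h1]
  exact ht

lemma mixedM (m y : R) (hm1 : e*m = m) (hm2 : m*e = 0) (hy1 : e*y = 0) (hy2 : y*e = y) :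
    Del D m y = 0 := by
  set m₀ := -(((-1:ℤ)^k) • m) with hm₀def
  have hm₀1 : e*m₀ = m₀ := by rw [hm₀def, mul_neg, (nu_A e k m hm1 hm2).1]
  have hm₀2 : m₀*e = 0 := by rw [hm₀def, neg_mul, (nu_A e k m hm1 hm2).2, neg_zero]
  have key := F2_1 e D k hD m₀ y e
  have c1 : Aop e k m₀ e = m := by
    have hC : m₀*e - e*m₀ = -m₀ := by rw [hm₀1, hm₀2, zero_sub]
    have hmm : -m₀ = ((-1:ℤ)^k) • m := by rw [hm₀def, neg_neg]
    rw [Aop, hC, hmm, adk_A e k _ (nu_A e k m hm1 hm2).1 (nu_A e k m hm1 hm2).2, nu_invol]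
  have c2 : Aop e k y e = y := by
    have hC : y*e - e*y = y := by rw [hy1, hy2, sub_zero]
    rw [Aop, hC, adk_B e k y hy1 hy2]
  have c3 : Aop e k (Del D m₀ y) e = 0 := by
    have hE := mixed_E halt e he D k hD m₀ y hm₀1 hm₀2 hy1 hy2
    have hC : (Del D m₀ y)*e - e*(Del D m₀ y) = 0 := by rw [← hE, sub_self]
    rw [Aop, hC, adk_zero]
  rw [c1, c2, c3] at key
  exact key

lemma mixedM' (m y : R) (hm1 : e*m = m) (hm2 : m*e = 0) (hy1 : e*y = 0) (hy2 : y*e = y) :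
    D (m + y) = D m + D y := by
  have h := mixedM halt e he D k hD m y hm1 hm2 hy1 hy2
  rw [Del, sub_sub] at h
  exact sub_eq_zero.mp h

lemma killA (b x : R) (hb1 : e*b = b) (hb2 : b*e = 0) (hx1 : e*x = x) (hx2 : x*e = 0) :
    Aop e k (Del D e b) x = 0 := by
  have key := F2_1 e D k hD e b x
  have c1 : Aop e k e x = ((-1:ℤ)^k) • x := by
    have hC : e*x - x*e = x := by rw [hx1, hx2, sub_zero]
    rw [Aop, hC, adk_A e k x hx1 hx2]
  have c2 : Aop e k b x = b*x - x*b := by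
    have h1 := mul_AA halt e he b x hb1 hb2 hx1 hx2
    have h2 := mul_AA halt e he x b hx1 hx2 hb1 hb2
    have hB := Bsub h1.1 h1.2 h2.1 h2.2
    rw [Aop, adk_B e k _ hB.1 hB.2]
  rw [c1, c2] at key
  have h1 := mul_AA halt e he b x hb1 hb2 hx1 hx2
  have h2 := mul_AA halt e he x b hx1 hx2 hb1 hb2
  have hB := Bsub h1.1 h1.2 h2.1 h2.2
  rw [mixedM halt e he D k hD _ _ (nu_A e k x hx1 hx2).1 (nu_A e k x hx1 hx2).2 hB.1 hB.2] at key
  exact key.symm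

lemma killB (d y : R) (hd1 : e*d = 0) (hd2 : d*e = d) (hy1 : e*y = 0) (hy2 : y*e = y) :
    Aop e k (Del D e d) y = 0 := by
  have key := F2_1 e D k hD e d y
  have c1 : Aop e k e y = -y := by
    have hC : e*y - y*e = -y := by rw [hy1, hy2, zero_sub]
    have hny1 : e*(-y) = 0 := by rw [mul_neg, hy1, neg_zero]
    have hny2 : (-y)*e = -y := by rw [neg_mul, hy2]
    rw [Aop, hC, adk_B e k (-y) hny1 hny2]
  have c2 : Aop e k d y = ((-1:ℤ)^k) • (d*y - y*d) := by
    have h1 := mul_BB halt e he d y hd1 hd2 hy1 hy2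
    have h2 := mul_BB halt e he y d hy1 hy2 hd1 hd2
    have hA := Asub h1.1 h1.2 h2.1 h2.2
    rw [Aop, adk_A e k _ hA.1 hA.2]
  rw [c1, c2] at key
  have h1 := mul_BB halt e he d y hd1 hd2 hy1 hy2
  have h2 := mul_BB halt e he y d hy1 hy2 hd1 hd2
  have hA := Asub h1.1 h1.2 h2.1 h2.2
  have hny1 : e*(-y) = 0 := by rw [mul_neg, hy1, neg_zero]
  have hny2 : (-y)*e = -y := by rw [neg_mul, hy2]
  rw [Del_symm, mixedM halt e he D k hD _ _
    (nu_A e k _ hA.1 hA.2).1 (nu_A e k _ hA.1 hA.2).2 hny1 hny2] at key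
  exact key.symm

lemma finalA (a b : R) (ha1 : e*a = a) (ha2 : a*e = 0) (hb1 : e*b = b) (hb2 : b*e = 0) :
    Del D a b = 0 := by
  suffices H : ∀ a b : R, e*a = a → a*e = 0 → e*b = b → b*e = 0 →
      Del D (((-1:ℤ)^k) • a) (((-1:ℤ)^k) • b) = 0 by
    have h := H (((-1:ℤ)^k) • a) (((-1:ℤ)^k) • b)
      (nu_A e k a ha1 ha2).1 (nu_A e k a ha1 ha2).2
      (nu_A e k b hb1 hb2).1 (nu_A e k b hb1 hb2).2
    rwa [nu_invol, nu_invol] at h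
  intro a b ha1 ha2 hb1 hb2
  have hT : e*(Del D e b) = (Del D e b)*e := E1' halt e he D k hD b e rfl
  have key := F2_2 e D k hD (e-a) e b
  have c1 : Aop e k (e-a) e = ((-1:ℤ)^k) • a := by
    have hC : (e-a)*e - e*(e-a) = a := by
      rw [sub_mul, mul_sub, he, ha1, ha2]; abel
    rw [Aop, hC, adk_A e k a ha1 ha2]
  have hab := mul_AA halt e he a b ha1 ha2 hb1 hb2
  have hba := mul_AA halt e he b a hb1 hb2 ha1 ha2
  have hcB := Bsub hab.1 hab.2 hba.1 hba.2
  have c2 : Aop e k (e-a) b = (((-1:ℤ)^k) • b) - (a*b - b*a) := by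
    have hC : (e-a)*b - b*(e-a) = b - (a*b - b*a) := by
      rw [sub_mul, mul_sub, hb1, hb2]; abel
    rw [Aop, hC, adk_sub, adk_A e k b hb1 hb2, adk_B e k _ hcB.1 hcB.2]
  have c3 : Aop e k (e-a) (Del D e b) = 0 := by
    have hC : (e-a)*(Del D e b) - (Del D e b)*(e-a)
        = (Del D e b)*a - a*(Del D e b) := by
      have h0 : (e-a)*(Del D e b) - (Del D e b)*(e-a)
          = (e*(Del D e b) - (Del D e b)*e) + ((Del D e b)*a - a*(Del D e b)) := by
        rw [sub_mul, mul_sub]; abel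
      rw [h0, show e*(Del D e b) - (Del D e b)*e = 0 from by rw [hT, sub_self], zero_add]
    rw [Aop, hC]
    exact killA halt e he D k hD b a hb1 hb2 ha1 ha2
  rw [c1, c2, c3] at key
  -- peel using mixed additivity
  have hnc1 : e*(-(a*b - b*a)) = 0 := by rw [mul_neg, hcB.1, neg_zero]
  have hnc2 : (-(a*b - b*a))*e = -(a*b - b*a) := by rw [neg_mul, hcB.2]
  have hsumA1 : e*(((-1:ℤ)^k) • a + ((-1:ℤ)^k) • b) = ((-1:ℤ)^k) • a + ((-1:ℤ)^k) • b := by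
    rw [mul_add, (nu_A e k a ha1 ha2).1, (nu_A e k b hb1 hb2).1]
  have hsumA2 : (((-1:ℤ)^k) • a + ((-1:ℤ)^k) • b)*e = 0 := by
    rw [add_mul, (nu_A e k a ha1 ha2).2, (nu_A e k b hb1 hb2).2, add_zero]
  have hM1 : D ((((-1:ℤ)^k) • b) + -(a*b - b*a)) = D (((-1:ℤ)^k) • b) + D (-(a*b - b*a)) :=
    mixedM' halt e he D k hD _ _ (nu_A e k b hb1 hb2).1 (nu_A e k b hb1 hb2).2 hnc1 hnc2
  have hM2 : D ((((-1:ℤ)^k) • a + ((-1:ℤ)^k) • b) + -(a*b - b*a))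
      = D (((-1:ℤ)^k) • a + ((-1:ℤ)^k) • b) + D (-(a*b - b*a)) :=
    mixedM' halt e he D k hD _ _ hsumA1 hsumA2 hnc1 hnc2
  rw [Del] at key
  rw [show ((-1:ℤ)^k) • a + ((((-1:ℤ)^k) • b) - (a*b - b*a))
      = (((-1:ℤ)^k) • a + ((-1:ℤ)^k) • b) + -(a*b - b*a) from by abel] at key
  rw [show (((-1:ℤ)^k) • b) - (a*b - b*a) = (((-1:ℤ)^k) • b) + -(a*b - b*a) from by abel] at key
  rw [hM1, hM2] at key
  rw [Del]
  exact cancel key (by abel)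

lemma finalB (c d : R) (hc1 : e*c = 0) (hc2 : c*e = c) (hd1 : e*d = 0) (hd2 : d*e = d) :
    Del D c d = 0 := by
  suffices H : ∀ c d : R, e*c = 0 → c*e = c → e*d = 0 → d*e = d →
      Del D (-c) (-d) = 0 by
    have h := H (-c) (-d) (by rw [mul_neg, hc1, neg_zero]) (by rw [neg_mul, hc2])
      (by rw [mul_neg, hd1, neg_zero]) (by rw [neg_mul, hd2])
    rwa [neg_neg, neg_neg] at h
  intro c d hc1 hc2 hd1 hd2
  have hT : e*(Del D e d) = (Del D e d)*e := E1' halt e he D k hD d e rfl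
  have key := F2_2 e D k hD (e-c) e d
  have c1 : Aop e k (e-c) e = -c := by
    have hC : (e-c)*e - e*(e-c) = -c := by
      rw [sub_mul, mul_sub, he, hc1, hc2]; abel
    have hnc1 : e*(-c) = 0 := by rw [mul_neg, hc1, neg_zero]
    have hnc2 : (-c)*e = -c := by rw [neg_mul, hc2]
    rw [Aop, hC, adk_B e k (-c) hnc1 hnc2]
  have hcd := mul_BB halt e he c d hc1 hc2 hd1 hd2
  have hdc := mul_BB halt e he d c hd1 hd2 hc1 hc2
  have hcA := Asub hcd.1 hcd.2 hdc.1 hdc.2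
  have c2 : Aop e k (e-c) d = (-d) - ((-1:ℤ)^k) • (c*d - d*c) := by
    have hC : (e-c)*d - d*(e-c) = (-d) - (c*d - d*c) := by
      rw [sub_mul, mul_sub, hd1, hd2]; abel
    have hnd1 : e*(-d) = 0 := by rw [mul_neg, hd1, neg_zero]
    have hnd2 : (-d)*e = -d := by rw [neg_mul, hd2]
    rw [Aop, hC, adk_sub, adk_B e k (-d) hnd1 hnd2, adk_A e k _ hcA.1 hcA.2]
  have c3 : Aop e k (e-c) (Del D e d) = 0 := by
    have hC : (e-c)*(Del D e d) - (Del D e d)*(e-c)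
        = (Del D e d)*c - c*(Del D e d) := by
      have h0 : (e-c)*(Del D e d) - (Del D e d)*(e-c)
          = (e*(Del D e d) - (Del D e d)*e) + ((Del D e d)*c - c*(Del D e d)) := by
        rw [sub_mul, mul_sub]; abel
      rw [h0, show e*(Del D e d) - (Del D e d)*e = 0 from by rw [hT, sub_self], zero_add]
    rw [Aop, hC]
    exact killB halt e he D k hD d c hd1 hd2 hc1 hc2
  rw [c1, c2, c3] at key
  have hν1 : e*(-(((-1:ℤ)^k) • (c*d - d*c))) = -(((-1:ℤ)^k) • (c*d - d*c)) := by
    rw [mul_neg, (nu_A e k _ hcA.1 hcA.2).1]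
  have hν2 : (-(((-1:ℤ)^k) • (c*d - d*c)))*e = 0 := by
    rw [neg_mul, (nu_A e k _ hcA.1 hcA.2).2, neg_zero]
  have hnd1 : e*(-d) = 0 := by rw [mul_neg, hd1, neg_zero]
  have hnd2 : (-d)*e = -d := by rw [neg_mul, hd2]
  have hsum1 : e*(-c + -d) = 0 := by
    rw [mul_add, mul_neg, hc1, mul_neg, hd1, neg_zero, add_zero]
  have hsum2 : (-c + -d)*e = -c + -d := by
    rw [add_mul, neg_mul, hc2, neg_mul, hd2]
  have hM1 : D ((-(((-1:ℤ)^k) • (c*d - d*c))) + -d)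
      = D (-(((-1:ℤ)^k) • (c*d - d*c))) + D (-d) :=
    mixedM' halt e he D k hD _ _ hν1 hν2 hnd1 hnd2
  have hM2 : D ((-(((-1:ℤ)^k) • (c*d - d*c))) + (-c + -d))
      = D (-(((-1:ℤ)^k) • (c*d - d*c))) + D (-c + -d) :=
    mixedM' halt e he D k hD _ _ hν1 hν2 hsum1 hsum2
  rw [Del] at key
  rw [show (-c) + ((-d) - ((-1:ℤ)^k) • (c*d - d*c))
      = (-(((-1:ℤ)^k) • (c*d - d*c))) + (-c + -d) from by abel] at key
  rw [show (-d) - ((-1:ℤ)^k) • (c*d - d*c)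
      = (-(((-1:ℤ)^k) • (c*d - d*c))) + -d from by abel] at key
  rw [hM1, hM2] at key
  rw [Del]
  exact cancel key (by abel)

end Claims2
end Stmt3Proof
theorem stmt3 {R : Type*} [NonUnitalNonAssocRing R] (halt : IsAlt R)
    (e₁ : R) (he : e₁ * e₁ = e₁) (hne : e₁ ≠ 0)
    (hnu : ¬ ∀ x : R, e₁ * x = x ∧ x * e₁ = x)
    (hcondi : ∀ a ∈ P11 e₁, ∀ b ∈ P22 e₁,
      (∀ x ∈ P12 e₁, (a + b) * x = x * (a + b)) → a + b ∈ rctr R)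
    (hcondii : ∀ a ∈ P11 e₁, ∀ b ∈ P22 e₁,
      (∀ x ∈ P21 e₁, (a + b) * x = x * (a + b)) → a + b ∈ rctr R)
    (n : ℕ) (hn : 2 ≤ n) (D : R → R) (hD : IsMultLieNDeriv n D) :
    (∀ a ∈ P12 e₁, ∀ b ∈ P12 e₁, D (a + b) = D a + D b) ∧
    (∀ a ∈ P21 e₁, ∀ b ∈ P21 e₁, D (a + b) = D a + D b) := by
  obtain ⟨k, rfl⟩ : ∃ k, n = k + 2 := ⟨n - 2, by omega⟩
  constructor
  · intro a ha b hb
    have h := Stmt3Proof.finalA halt e₁ he D k hD a b ha.1 ha.2 hb.1 hb.2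
    rw [Stmt3Proof.Del, sub_sub] at h
    exact sub_eq_zero.mp h
  · intro a ha b hb
    have h := Stmt3Proof.finalB halt e₁ he D k hD a b ha.1 ha.2 hb.1 hb.2
    rw [Stmt3Proof.Del, sub_sub] at h
    exact sub_eq_zero.mp h
end

section
/- Let R be an alternative ring with a nontrivial idempotent e₁ satisfying conditions (i) and (ii), let n ≥ 2 be an integer and let D : R → R be a multiplicative Lie n-derivation. Then for all a ∈ R₁₁, b ∈ R₁₂, c ∈ R₂₁ and d ∈ R₂₂ there exists z ∈ Z(R) such that D(a + b + c + d) = D(a) + D(b) + D(c) + D(d) + z. -/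
set_option linter.unusedSectionVars false

namespace LieNAux

variable {R : Type*} [NonUnitalNonAssocRing R]

/-- commutator -/
def br (x y : R) : R := x * y - y * x

/-- left-nested commutator starting at `a`, bracketing successively with elements of `l`. -/
def q (a : R) (l : List R) : R := l.foldl br a

@[simp] lemma q_nil (a : R) : q a [] = a := rfl

@[simp] lemma q_cons (a h : R) (t : List R) : q a (h :: t) = q (br a h) t := rfl

lemma q_append (a : R) (l₁ l₂ : List R) : q a (l₁ ++ l₂) = q (q a l₁) l₂ :=
  List.foldl_append ..

lemma br_add_left (u v w : R) : br (u + v) w = br u w + br v w := by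
  simp only [br, add_mul, mul_add]; abel

lemma br_sub_left (u v w : R) : br (u - v) w = br u w - br v w := by
  simp only [br, sub_mul, mul_sub]; abel

lemma br_zero_left (w : R) : br 0 w = 0 := by simp [br]

lemma br_add_right (a u v : R) : br a (u + v) = br a u + br a v := by
  simp only [br, add_mul, mul_add]; abel

lemma br_sub_right (a u v : R) : br a (u - v) = br a u - br a v := by
  simp only [br, sub_mul, mul_sub]; abel

lemma q_add_head : ∀ (l : List R) (u v : R), q (u + v) l = q u l + q v l := by
  intro l
  induction l with
  | nil => intro u v; simp
  | cons h t ih => intro u v; simp only [q_cons, br_add_left]; exact ih _ _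

lemma q_sub_head : ∀ (l : List R) (u v : R), q (u - v) l = q u l - q v l := by
  intro l
  induction l with
  | nil => intro u v; simp
  | cons h t ih => intro u v; simp only [q_cons, br_sub_left]; exact ih _ _

lemma q_zero_head : ∀ l : List R, q 0 l = 0 := by
  intro l
  induction l with
  | nil => simp
  | cons h t ih => simpa [br_zero_left] using ih

lemma q_sum_head {ι : Type*} (s : Finset ι) (f : ι → R) (l : List R) :
    q (∑ i ∈ s, f i) l = ∑ i ∈ s, q (f i) l := by
  classical
  induction s using Finset.induction with
  | empty => simp [q_zero_head]
  | insert _ _ hni ih => rw [Finset.sum_insert hni, Finset.sum_insert hni, q_add_head, ih]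

/-- `pn` in terms of `q`. -/
lemma pn_q : ∀ (l : List R) (a : R),
    pn (l.length + 1) (fun i : Fin (l.length + 1) => (a :: l).getD i 0) = q a l := by
  intro l
  induction l using List.reverseRecOn with
  | nil => intro a; simp [pn]
  | append_singleton t w ih =>
    intro a
    have hlen : (t ++ [w]).length = t.length + 1 := by simp
    rw [hlen]
    show pn (t.length + 1 + 1) _ = _
    rw [pn]
    have h1 : (fun i : Fin (t.length + 1) =>
        (fun i : Fin (t.length + 1 + 1) => (a :: (t ++ [w])).getD i 0) i.castSucc)
        = fun i : Fin (t.length + 1) => (a :: t).getD i 0 := by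
      funext i
      simp only [Fin.coe_castSucc]
      have : (a :: (t ++ [w])) = (a :: t) ++ [w] := by simp
      rw [this, List.getD_append]
      simp only [List.length_cons]
      omega
    have h2 : (a :: (t ++ [w])).getD ((Fin.last (t.length + 1) : Fin (t.length + 1 + 1)) : ℕ) 0 = w := by
      have : (a :: (t ++ [w])) = (a :: t) ++ [w] := by simp
      rw [this]
      simp only [Fin.val_last]
      rw [List.getD_append_right]
      · simp
      · simp
    rw [h1, h2, ih]
    rw [q_append, q_cons, q_nil]
    rfl

lemma getD_set_self : ∀ (l : List R) (j : ℕ), j < l.length → ∀ (w : R),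
    (l.set j w).getD j 0 = w := by
  intro l
  induction l with
  | nil => intro j h; simp at h
  | cons h t ih =>
    intro j hj w
    cases j with
    | zero => simp
    | succ k => simpa using ih k (by simpa using hj) w

lemma getD_set_ne : ∀ (l : List R) (j k : ℕ), k ≠ j → ∀ (w : R),
    (l.set j w).getD k 0 = l.getD k 0 := by
  intro l
  induction l with
  | nil => intro j k h w; simp
  | cons h t ih =>
    intro j k hk w
    cases j with
    | zero =>
      cases k with
      | zero => exact absurd rfl hk
      | succ m => simp
    | succ j' =>
      cases k with
      | zero => simp
      | succ m => simpa using ih j' m (by omega) w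

/-- list-style formulation of the multiplicative Lie `N`-derivation law. -/
def QLaw (N : ℕ) (D : R → R) : Prop :=
  ∀ (a : R) (l : List R), l.length + 1 = N →
    D (q a l) = q (D a) l + ∑ i : Fin l.length, q a (l.set i (D (l.getD i 0)))

lemma qlaw_of_pnlaw {N : ℕ} {D : R → R} (hD : IsMultLieNDeriv N D) : QLaw N D := by
  intro a l h
  subst h
  have H := hD (fun i : Fin (l.length + 1) => (a :: l).getD i 0)
  rw [pn_q] at H
  rw [Fin.sum_univ_succ] at H
  have h0 : (a :: l).getD (((0 : Fin (l.length + 1))) : ℕ) 0 = a := by simp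
  have hupd0 : Function.update (fun i : Fin (l.length + 1) => (a :: l).getD i 0) 0
      (D a) = fun i : Fin (l.length + 1) => ((D a) :: l).getD i 0 := by
    funext i
    rcases i with ⟨iv, hiv⟩
    rw [Function.update_apply]
    cases iv with
    | zero => simp
    | succ k =>
      have : (⟨k + 1, hiv⟩ : Fin (l.length + 1)) ≠ 0 := by
        simp [Fin.ext_iff]
      rw [if_neg this]
      simp
  rw [h0, hupd0, pn_q] at H
  have hsum : ∀ j : Fin l.length,
      pn (l.length + 1) (Function.update (fun i : Fin (l.length + 1) => (a :: l).getD i 0)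
        j.succ (D ((a :: l).getD ((j.succ : Fin (l.length + 1)) : ℕ) 0)))
      = q a (l.set j (D (l.getD j 0))) := by
    intro j
    have hxval : (a :: l).getD ((j.succ : Fin (l.length + 1)) : ℕ) 0 = l.getD j 0 := by
      simp [Fin.val_succ]
    rw [hxval]
    have hupd : Function.update (fun i : Fin (l.length + 1) => (a :: l).getD i 0)
        j.succ (D (l.getD j 0))
        = fun i : Fin (l.length + 1) => (a :: l.set j (D (l.getD j 0))).getD i 0 := by
      funext i
      rcases i with ⟨iv, hiv⟩
      rw [Function.update_apply]
      by_cases hij : (⟨iv, hiv⟩ : Fin (l.length + 1)) = j.succ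
      · rw [if_pos hij]
        have : iv = (j : ℕ) + 1 := by
          simpa [Fin.ext_iff, Fin.val_succ] using hij
        subst this
        simp only [List.getD_cons_succ]
        rw [getD_set_self _ _ j.isLt]
      · rw [if_neg hij]
        cases iv with
        | zero => simp
        | succ k =>
          have hkj : k ≠ (j : ℕ) := by
            intro hk
            apply hij
            simp [Fin.ext_iff, Fin.val_succ, hk]
          simp only [List.getD_cons_succ]
          rw [getD_set_ne _ _ _ hkj]
    rw [hupd]
    have := pn_q (l.set j (D (l.getD j 0))) a
    rw [List.length_set] at this
    exact this
  rw [H]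
  congr 1
  exact Finset.sum_congr rfl (fun j _ => hsum j)

end LieNAux

namespace LieNAux

variable {R : Type*} [NonUnitalNonAssocRing R] {D : R → R} {N : ℕ}

lemma qlaw_boot_main (hq : QLaw N D) (a : R) (l₁ l₂ : List R)
    (h₁ : l₁.length + 1 = N) (h₂ : l₂.length + 1 = N) :
    D (q a (l₁ ++ l₂)) = q (D a) (l₁ ++ l₂)
      + ∑ i : Fin (l₁ ++ l₂).length,
          q a ((l₁ ++ l₂).set i (D ((l₁ ++ l₂).getD i 0))) := by
  have e1 := hq (q a l₁) l₂ h₂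
  have e2 := hq a l₁ h₁
  rw [e2] at e1
  rw [q_add_head, q_sum_head] at e1
  simp only [← q_append] at e1
  have hS : (∑ i : Fin (l₁ ++ l₂).length, q a ((l₁ ++ l₂).set i (D ((l₁ ++ l₂).getD i 0))))
      = (∑ j : Fin l₁.length, q a ((l₁.set j (D (l₁.getD j 0))) ++ l₂))
        + ∑ i : Fin l₂.length, q a (l₁ ++ (l₂.set i (D (l₂.getD i 0)))) := by
    have hL := Fin.sum_univ_eq_sum_range
      (fun k => q a ((l₁ ++ l₂).set k (D ((l₁ ++ l₂).getD k 0)))) ((l₁ ++ l₂).length)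
    have hL1 := Fin.sum_univ_eq_sum_range
      (fun k => q a ((l₁.set k (D (l₁.getD k 0))) ++ l₂)) l₁.length
    have hL2 := Fin.sum_univ_eq_sum_range
      (fun k => q a (l₁ ++ (l₂.set k (D (l₂.getD k 0))))) l₂.length
    rw [hL, hL1, hL2, List.length_append, Finset.sum_range_add]
    congr 1
    · refine Finset.sum_congr rfl fun k hk => ?_
      have hk' : k < l₁.length := Finset.mem_range.mp hk
      rw [List.getD_append _ _ _ _ hk']
      rw [List.set_append, if_pos hk']
    · refine Finset.sum_congr rfl fun k hk => ?_
      rw [List.getD_append_right _ _ _ _ (Nat.le_add_right _ _)]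
      rw [List.set_append, if_neg (by omega)]
      have hidx : l₁.length + k - l₁.length = k := by omega
      rw [hidx]
  rw [hS, e1]
  abel

lemma qlaw_boot (hq : QLaw N D) (hN : 2 ≤ N) : QLaw (2 * N - 1) D := by
  intro a l hlen
  have h₁ : (l.take (N - 1)).length + 1 = N := by
    rw [List.length_take]; omega
  have h₂ : (l.drop (N - 1)).length + 1 = N := by
    rw [List.length_drop]; omega
  have key := qlaw_boot_main hq a (l.take (N - 1)) (l.drop (N - 1)) h₁ h₂
  rwa [List.take_append_drop] at key

lemma master_head (hq : QLaw N D) (u v : R) (l : List R) (h : l.length + 1 = N) :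
    D (q (u + v) l) - D (q u l) - D (q v l) = q (D (u + v) - D u - D v) l := by
  rw [hq (u + v) l h, hq u l h, hq v l h, q_sub_head, q_sub_head]
  have hs : (∑ i : Fin l.length, q (u + v) (l.set i (D (l.getD i 0))))
      = (∑ i : Fin l.length, q u (l.set i (D (l.getD i 0))))
        + (∑ i : Fin l.length, q v (l.set i (D (l.getD i 0)))) := by
    rw [← Finset.sum_add_distrib]
    exact Finset.sum_congr rfl fun i _ => q_add_head _ _ _
  rw [hs]; abel

lemma master_head4 (hq : QLaw N D) (a₁ a₂ a₃ a₄ : R) (l : List R) (h : l.length + 1 = N) :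
    D (q (a₁ + a₂ + a₃ + a₄) l) - D (q a₁ l) - D (q a₂ l) - D (q a₃ l) - D (q a₄ l)
      = q (D (a₁ + a₂ + a₃ + a₄) - D a₁ - D a₂ - D a₃ - D a₄) l := by
  have m1 := master_head hq a₁ a₂ l h
  have m2 := master_head hq (a₁ + a₂) a₃ l h
  have m3 := master_head hq (a₁ + a₂ + a₃) a₄ l h
  have hr : q (D (a₁ + a₂ + a₃ + a₄) - D a₁ - D a₂ - D a₃ - D a₄) l
      = q (D (a₁ + a₂ + a₃ + a₄) - D (a₁ + a₂ + a₃) - D a₄) l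
        + (q (D (a₁ + a₂ + a₃) - D (a₁ + a₂) - D a₃) l
        + q (D (a₁ + a₂) - D a₁ - D a₂) l) := by
    rw [← q_add_head, ← q_add_head]
    congr 1
    abel
  rw [hr, ← m1, ← m2, ← m3]
  abel

lemma master_mid0 (hq : QLaw N D) (a u v : R) (l₂ : List R) (h : l₂.length + 2 = N) :
    D (q a ((u + v) :: l₂)) - D (q a (u :: l₂)) - D (q a (v :: l₂))
      = q a ((D (u + v) - D u - D v) :: l₂) := by
  have h' : ∀ w : R, (w :: l₂).length + 1 = N := by
    intro w; simp only [List.length_cons]; omega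
  have expand : ∀ w : R, D (q a (w :: l₂)) = q (br (D a) w) l₂ + q (br a (D w)) l₂
      + ∑ i : Fin l₂.length, q (br a w) (l₂.set i (D (l₂.getD i 0))) := by
    intro w
    rw [hq a (w :: l₂) (h' w)]
    rw [show (∑ i : Fin (w :: l₂).length, q a ((w :: l₂).set i (D ((w :: l₂).getD i 0))))
        = ∑ i : Fin (l₂.length + 1), q a ((w :: l₂).set i (D ((w :: l₂).getD i 0))) from rfl]
    rw [Fin.sum_univ_succ]
    have t0 : q a ((w :: l₂).set ((0 : Fin (l₂.length + 1)) : ℕ)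
          (D ((w :: l₂).getD ((0 : Fin (l₂.length + 1)) : ℕ) 0)))
        = q (br a (D w)) l₂ := by
      simp
    have ts : ∀ i : Fin l₂.length,
        q a ((w :: l₂).set ((i.succ : Fin (l₂.length + 1)) : ℕ)
          (D ((w :: l₂).getD ((i.succ : Fin (l₂.length + 1)) : ℕ) 0)))
        = q (br a w) (l₂.set i (D (l₂.getD i 0))) := by
      intro i
      simp [Fin.val_succ]
    rw [t0, Finset.sum_congr rfl fun i _ => ts i, q_cons]
    abel
  rw [expand, expand, expand, q_cons]
  have e1 : br (D a) (u + v) = br (D a) u + br (D a) v := br_add_right _ _ _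
  have e2 : br a (D (u + v) - D u - D v) = br a (D (u + v)) - br a (D u) - br a (D v) := by
    rw [br_sub_right, br_sub_right]
  have e3 : q (br a (u + v)) = fun L => q (br a u) L + q (br a v) L := by
    funext L; rw [br_add_right, q_add_head]
  rw [e1, e2, q_add_head, q_sub_head, q_sub_head]
  have hs : (∑ i : Fin l₂.length, q (br a (u + v)) (l₂.set i (D (l₂.getD i 0))))
      = (∑ i : Fin l₂.length, q (br a u) (l₂.set i (D (l₂.getD i 0))))
        + (∑ i : Fin l₂.length, q (br a v) (l₂.set i (D (l₂.getD i 0)))) := by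
    rw [← Finset.sum_add_distrib]
    refine Finset.sum_congr rfl fun i _ => ?_
    rw [br_add_right, q_add_head]
  rw [hs]; abel

end LieNAux

namespace LieNAux

variable {R : Type*} [NonUnitalNonAssocRing R]

section Peirce

variable {e : R}

lemma skew_l (halt : IsAlt R) (u v w : R) :
    (u * v) * w + (v * u) * w = u * (v * w) + v * (u * w) := by
  have h := (halt (u + v) w).1
  have hu := (halt u w).1
  have hv := (halt v w).1
  simp only [add_mul, mul_add] at h
  linear_combination (norm := abel) h - hu - hv

lemma skew_r (halt : IsAlt R) (u v w : R) :
    (w * u) * v + (w * v) * u = w * (u * v) + w * (v * u) := by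
  have h := (halt (u + v) w).2
  have hu := (halt u w).2
  have hv := (halt v w).2
  simp only [add_mul, mul_add] at h
  linear_combination (norm := abel) h - hu - hv

/-- `e(eu) = eu` -/
lemma lee (halt : IsAlt R) (he : e * e = e) (u : R) : e * (e * u) = e * u := by
  have := (halt e u).1
  rw [he] at this
  exact this.symm

/-- `(ue)e = ue` -/
lemma ree (halt : IsAlt R) (he : e * e = e) (u : R) : (u * e) * e = u * e := by
  have := (halt e u).2
  rw [he] at this
  exact this

/-- flexibility at `e`:  `(eu)e = e(ue)` -/
lemma flex_e (halt : IsAlt R) (he : e * e = e) (u : R) : (e * u) * e = e * (u * e) := by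
  have h := skew_l halt u e e
  have h1 := ree halt he u
  have h2 : u * (e * e) = u * e := by rw [he]
  linear_combination (norm := abel) h - h1 + h2

/-- `e(uv) = (eu)v + (ue)v − u(ev)` -/
lemma H1 (halt : IsAlt R) (u v : R) :
    e * (u * v) = (e * u) * v + (u * e) * v - u * (e * v) := by
  have h := skew_l halt u e v
  linear_combination (norm := abel) -h

/-- `(uv)e = u(ve) + u(ev) − (ue)v` -/
lemma H2 (halt : IsAlt R) (u v : R) :
    (u * v) * e = u * (v * e) + u * (e * v) - (u * e) * v := by
  have h := skew_r halt v e u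
  linear_combination (norm := abel) h

/-- `(ue)v − u(ev) = (ev)u − e(vu)` -/
lemma H3 (halt : IsAlt R) (u v : R) :
    (u * e) * v - u * (e * v) = (e * v) * u - e * (v * u) := by
  have h1 := skew_l halt u e v
  have h2 := skew_r halt u v e
  linear_combination (norm := abel) h1 - h2

end Peirce

end LieNAux

namespace LieNAux

variable {R : Type*} [NonUnitalNonAssocRing R] {e : R}

lemma mem11 {x : R} : x ∈ P11 e ↔ e * x = x ∧ x * e = x := Iff.rfl
lemma mem12 {x : R} : x ∈ P12 e ↔ e * x = x ∧ x * e = 0 := Iff.rfl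
lemma mem21 {x : R} : x ∈ P21 e ↔ e * x = 0 ∧ x * e = x := Iff.rfl
lemma mem22 {x : R} : x ∈ P22 e ↔ e * x = 0 ∧ x * e = 0 := Iff.rfl

section Rules

lemma p11_p12 (halt : IsAlt R) {a x : R} (ha : a ∈ P11 e) (hx : x ∈ P12 e) : a * x ∈ P12 e := by
  refine ⟨?_, ?_⟩
  · rw [H1 halt a x, ha.1, ha.2, hx.1]
    try simp only [zero_mul, mul_zero, sub_zero, zero_sub, add_zero, zero_add, sub_self, neg_zero]
    try abel
  · rw [H2 halt a x, hx.2, hx.1, ha.2]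
    try simp only [zero_mul, mul_zero, sub_zero, zero_sub, add_zero, zero_add, sub_self, neg_zero]
    try abel

lemma p12_p11_zero (halt : IsAlt R) {a x : R} (hx : x ∈ P12 e) (ha : a ∈ P11 e) : x * a = 0 := by
  have m : e * (a * x) = a * x := (p11_p12 halt ha hx).1
  have h3 := H3 (e := e) halt x a
  rw [hx.2, ha.1, zero_mul, m] at h3
  linear_combination (norm := abel) -h3

lemma p12_p22 (halt : IsAlt R) {x d : R} (hx : x ∈ P12 e) (hd : d ∈ P22 e) : x * d ∈ P12 e := by
  refine ⟨?_, ?_⟩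
  · rw [H1 halt x d, hx.1, hx.2, hd.1]
    try simp only [zero_mul, mul_zero, sub_zero, zero_sub, add_zero, zero_add, sub_self, neg_zero]
    try abel
  · rw [H2 halt x d, hd.2, hd.1, hx.2]
    try simp only [zero_mul, mul_zero, sub_zero, zero_sub, add_zero, zero_add, sub_self, neg_zero]
    try abel

lemma p22_p12_zero (halt : IsAlt R) {x d : R} (hd : d ∈ P22 e) (hx : x ∈ P12 e) : d * x = 0 := by
  have m : e * (x * d) = x * d := (p12_p22 halt hx hd).1
  have h3 := H3 (e := e) halt d x
  rw [hd.2, hx.1, zero_mul, m] at h3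
  linear_combination (norm := abel) -h3

lemma p12_p12 (halt : IsAlt R) {b x : R} (hb : b ∈ P12 e) (hx : x ∈ P12 e) : b * x ∈ P21 e := by
  refine ⟨?_, ?_⟩
  · rw [H1 halt b x, hb.1, hb.2, hx.1]
    try simp only [zero_mul, mul_zero, sub_zero, zero_sub, add_zero, zero_add, sub_self, neg_zero]
    try abel
  · rw [H2 halt b x, hx.2, hx.1, hb.2]
    try simp only [zero_mul, mul_zero, sub_zero, zero_sub, add_zero, zero_add, sub_self, neg_zero]
    try abel

lemma p21_p12 (halt : IsAlt R) {c x : R} (hc : c ∈ P21 e) (hx : x ∈ P12 e) : c * x ∈ P22 e := by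
  refine ⟨?_, ?_⟩
  · rw [H1 halt c x, hc.1, hc.2, hx.1]
    try simp only [zero_mul, mul_zero, sub_zero, zero_sub, add_zero, zero_add, sub_self, neg_zero]
    try abel
  · rw [H2 halt c x, hx.2, hx.1, hc.2]
    try simp only [zero_mul, mul_zero, sub_zero, zero_sub, add_zero, zero_add, sub_self, neg_zero]
    try abel

lemma p12_p21 (halt : IsAlt R) {x c : R} (hx : x ∈ P12 e) (hc : c ∈ P21 e) : x * c ∈ P11 e := by
  refine ⟨?_, ?_⟩
  · rw [H1 halt x c, hx.1, hx.2, hc.1]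
    try simp only [zero_mul, mul_zero, sub_zero, zero_sub, add_zero, zero_add, sub_self, neg_zero]
    try abel
  · rw [H2 halt x c, hc.2, hc.1, hx.2]
    try simp only [zero_mul, mul_zero, sub_zero, zero_sub, add_zero, zero_add, sub_self, neg_zero]
    try abel

lemma p21_p11 (halt : IsAlt R) {y a : R} (hy : y ∈ P21 e) (ha : a ∈ P11 e) : y * a ∈ P21 e := by
  refine ⟨?_, ?_⟩
  · rw [H1 halt y a, hy.1, hy.2, ha.1]
    try simp only [zero_mul, mul_zero, sub_zero, zero_sub, add_zero, zero_add, sub_self, neg_zero]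
    try abel
  · rw [H2 halt y a, ha.2, ha.1, hy.2]
    try simp only [zero_mul, mul_zero, sub_zero, zero_sub, add_zero, zero_add, sub_self, neg_zero]
    try abel

lemma p11_p21_zero (halt : IsAlt R) {y a : R} (ha : a ∈ P11 e) (hy : y ∈ P21 e) : a * y = 0 := by
  have m : e * (y * a) = 0 := (p21_p11 halt hy ha).1
  have h3 := H3 (e := e) halt a y
  rw [ha.2, hy.1, mul_zero, m] at h3
  rw [zero_mul] at h3
  linear_combination (norm := abel) h3

lemma p22_p21 (halt : IsAlt R) {d y : R} (hd : d ∈ P22 e) (hy : y ∈ P21 e) : d * y ∈ P21 e := by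
  refine ⟨?_, ?_⟩
  · rw [H1 halt d y, hd.1, hd.2, hy.1]
    try simp only [zero_mul, mul_zero, sub_zero, zero_sub, add_zero, zero_add, sub_self, neg_zero]
    try abel
  · rw [H2 halt d y, hy.2, hy.1, hd.2]
    try simp only [zero_mul, mul_zero, sub_zero, zero_sub, add_zero, zero_add, sub_self, neg_zero]
    try abel

lemma p21_p22_zero (halt : IsAlt R) {y d : R} (hy : y ∈ P21 e) (hd : d ∈ P22 e) : y * d = 0 := by
  have m : e * (d * y) = 0 := (p22_p21 halt hd hy).1
  have h3 := H3 (e := e) halt y d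
  rw [hy.2, hd.1, mul_zero, m] at h3
  rw [zero_mul] at h3
  linear_combination (norm := abel) h3

end Rules

section Closure

lemma P12_add {u v : R} (hu : u ∈ P12 e) (hv : v ∈ P12 e) : u + v ∈ P12 e :=
  ⟨by rw [mul_add, hu.1, hv.1], by rw [add_mul, hu.2, hv.2, add_zero]⟩

lemma P12_neg {u : R} (hu : u ∈ P12 e) : -u ∈ P12 e :=
  ⟨by rw [mul_neg, hu.1], by rw [neg_mul, hu.2, neg_zero]⟩

lemma P12_sub {u v : R} (hu : u ∈ P12 e) (hv : v ∈ P12 e) : u - v ∈ P12 e :=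
  ⟨by rw [mul_sub, hu.1, hv.1], by rw [sub_mul, hu.2, hv.2, sub_zero]⟩

lemma P21_add {u v : R} (hu : u ∈ P21 e) (hv : v ∈ P21 e) : u + v ∈ P21 e :=
  ⟨by rw [mul_add, hu.1, hv.1, add_zero], by rw [add_mul, hu.2, hv.2]⟩

lemma P21_neg {u : R} (hu : u ∈ P21 e) : -u ∈ P21 e :=
  ⟨by rw [mul_neg, hu.1, neg_zero], by rw [neg_mul, hu.2]⟩

lemma P21_sub {u v : R} (hu : u ∈ P21 e) (hv : v ∈ P21 e) : u - v ∈ P21 e :=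
  ⟨by rw [mul_sub, hu.1, hv.1, sub_zero], by rw [sub_mul, hu.2, hv.2]⟩

lemma P11_e (he : e * e = e) : e ∈ P11 e := ⟨he, he⟩

lemma P11_neg {u : R} (hu : u ∈ P11 e) : -u ∈ P11 e :=
  ⟨by rw [mul_neg, hu.1], by rw [neg_mul, hu.2]⟩

lemma P11_add {u v : R} (hu : u ∈ P11 e) (hv : v ∈ P11 e) : u + v ∈ P11 e :=
  ⟨by rw [mul_add, hu.1, hv.1], by rw [add_mul, hu.2, hv.2]⟩

lemma P22_add {u v : R} (hu : u ∈ P22 e) (hv : v ∈ P22 e) : u + v ∈ P22 e :=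
  ⟨by rw [mul_add, hu.1, hv.1, add_zero], by rw [add_mul, hu.2, hv.2, add_zero]⟩

lemma sep12 {v w : R} (hv : v ∈ P12 e) (hw : w ∈ P21 e) (h : v + w = 0) :
    v = 0 ∧ w = 0 := by
  have h1 : e * (v + w) = v := by rw [mul_add, hv.1, hw.1, add_zero]
  rw [h, mul_zero] at h1
  constructor
  · exact h1.symm
  · have : v + w = 0 := h
    rw [← h1] at this
    simpa using this

end Closure

section AdIter

/-- bracketing with `e` on the right:  `Ad e w = [w, e]`. -/
def Ad (e : R) : R → R := fun w => w * e - e * w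

lemma q_replicate (u : R) : ∀ k : ℕ, q u (List.replicate k e) = (Ad e)^[k] u := by
  intro k
  induction k generalizing u with
  | zero => simp
  | succ m ih =>
    rw [List.replicate_succ, q_cons, Function.iterate_succ_apply]
    exact ih _

lemma ad_add (u v : R) : Ad e (u + v) = Ad e u + Ad e v := by
  simp only [Ad, add_mul, mul_add]; abel

lemma ad_neg (u : R) : Ad e (-u) = -Ad e u := by
  simp only [Ad, neg_mul, mul_neg]; abel

lemma ad_zero : Ad e 0 = 0 := by simp [Ad]

lemma ad_p12 {x : R} (hx : x ∈ P12 e) : Ad e x = -x := by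
  simp only [Ad, hx.1, hx.2]; abel

lemma ad_p21 {x : R} (hx : x ∈ P21 e) : Ad e x = x := by
  simp only [Ad, hx.1, hx.2]; abel

lemma ad_p11 {x : R} (hx : x ∈ P11 e) : Ad e x = 0 := by
  simp only [Ad, hx.1, hx.2]; abel

lemma ad_p22 {x : R} (hx : x ∈ P22 e) : Ad e x = 0 := by
  simp only [Ad, hx.1, hx.2]; abel

lemma adk_zero (k : ℕ) : (Ad e)^[k] (0 : R) = 0 :=
  Function.iterate_fixed ad_zero k

lemma adk_add (k : ℕ) (u v : R) : (Ad e)^[k] (u + v) = (Ad e)^[k] u + (Ad e)^[k] v := by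
  induction k generalizing u v with
  | zero => simp
  | succ m ih => rw [Function.iterate_succ_apply, Function.iterate_succ_apply,
      Function.iterate_succ_apply, ad_add]; exact ih _ _

lemma adk_neg (k : ℕ) (u : R) : (Ad e)^[k] (-u) = -(Ad e)^[k] u := by
  induction k generalizing u with
  | zero => simp
  | succ m ih => rw [Function.iterate_succ_apply, Function.iterate_succ_apply, ad_neg]
                 exact ih _

lemma adk_sub (k : ℕ) (u v : R) : (Ad e)^[k] (u - v) = (Ad e)^[k] u - (Ad e)^[k] v := by
  rw [sub_eq_add_neg, adk_add, adk_neg, ← sub_eq_add_neg]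

lemma adk_even_12 {x : R} (hx : x ∈ P12 e) : ∀ k : ℕ, (Ad e)^[2 * k] x = x := by
  intro k
  induction k generalizing x with
  | zero => simp
  | succ m ih =>
    have h2 : 2 * (m + 1) = 2 * m + 2 := by ring
    rw [h2, Function.iterate_add_apply]
    have : (Ad e)^[2] x = x := by
      rw [show (2:ℕ) = 1 + 1 from rfl, Function.iterate_add_apply]
      simp only [Function.iterate_one]
      rw [ad_p12 hx, ad_neg, ad_p12 hx, neg_neg]
    rw [this]
    exact ih hx

lemma adk_even_21 {x : R} (hx : x ∈ P21 e) : ∀ k : ℕ, (Ad e)^[2 * k] x = x := by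
  intro k
  induction k generalizing x with
  | zero => simp
  | succ m ih =>
    have h2 : 2 * (m + 1) = 2 * m + 2 := by ring
    rw [h2, Function.iterate_add_apply]
    have : (Ad e)^[2] x = x := by
      rw [show (2:ℕ) = 1 + 1 from rfl, Function.iterate_add_apply]
      simp only [Function.iterate_one]
      rw [ad_p21 hx, ad_p21 hx]
    rw [this]
    exact ih hx

lemma adk_odd_12 {x : R} (hx : x ∈ P12 e) (k : ℕ) : (Ad e)^[2 * k + 1] x = -x := by
  rw [Function.iterate_succ_apply, ad_p12 hx, adk_neg, adk_even_12 hx]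

lemma adk_odd_21 {x : R} (hx : x ∈ P21 e) (k : ℕ) : (Ad e)^[2 * k + 1] x = x := by
  rw [Function.iterate_succ_apply, ad_p21 hx, adk_even_21 hx]

lemma adk_succ_11 {x : R} (hx : x ∈ P11 e) (k : ℕ) : (Ad e)^[k + 1] x = 0 := by
  rw [Function.iterate_succ_apply, ad_p11 hx, adk_zero]

lemma adk_succ_22 {x : R} (hx : x ∈ P22 e) (k : ℕ) : (Ad e)^[k + 1] x = 0 := by
  rw [Function.iterate_succ_apply, ad_p22 hx, adk_zero]

lemma mem12_part (halt : IsAlt R) (he : e * e = e) (u : R) : e * u - (e * u) * e ∈ P12 e := by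
  refine ⟨?_, ?_⟩
  · rw [mul_sub, lee halt he u, ← flex_e halt he (e * u), lee halt he u]
  · rw [sub_mul, ree halt he (e * u), sub_self]

lemma mem21_part (halt : IsAlt R) (he : e * e = e) (u : R) : u * e - e * (u * e) ∈ P21 e := by
  refine ⟨?_, ?_⟩
  · rw [mul_sub, lee halt he (u * e), sub_self]
  · rw [sub_mul, ree halt he u, flex_e halt he (u * e), ree halt he u]

lemma mem11_part (halt : IsAlt R) (he : e * e = e) (u : R) : (e * u) * e ∈ P11 e := by
  refine ⟨?_, ?_⟩
  · rw [← flex_e halt he (e * u), lee halt he u]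
  · exact ree halt he (e * u)

lemma mem22_part (halt : IsAlt R) (he : e * e = e) (u : R) : u - e * u - u * e + (e * u) * e ∈ P22 e := by
  refine ⟨?_, ?_⟩
  · have h1 : e * (u - e * u - u * e + (e * u) * e)
        = e * u - e * (e * u) - e * (u * e) + e * ((e * u) * e) := by
      rw [mul_add, mul_sub, mul_sub]
    rw [h1, lee halt he u, ← flex_e halt he (e * u), lee halt he u, ← flex_e halt he u]
    abel
  · have h2 : (u - e * u - u * e + (e * u) * e) * e
        = u * e - (e * u) * e - (u * e) * e + ((e * u) * e) * e := by
      rw [add_mul, sub_mul, sub_mul]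
    rw [h2, ree halt he u, ree halt he (e * u)]
    abel

lemma decomp (halt : IsAlt R) (he : e * e = e) (u : R) : u = (e * u) * e + (e * u - (e * u) * e)
    + (u * e - e * (u * e)) + (u - e * u - u * e + (e * u) * e) := by
  linear_combination (norm := abel) -(flex_e halt he u)

lemma ad2_general (halt : IsAlt R) (he : e * e = e) (u : R) : Ad e (Ad e u)
    = (e * u - (e * u) * e) + (u * e - e * (u * e)) := by
  show (u * e - e * u) * e - e * (u * e - e * u) = _
  rw [sub_mul, mul_sub, ree halt he u, lee halt he u]
  abel

lemma adk_even_general (halt : IsAlt R) (he : e * e = e) (p : ℕ) (u : R) : (Ad e)^[2 * p + 2] u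
    = (e * u - (e * u) * e) + (u * e - e * (u * e)) := by
  rw [Function.iterate_add_apply]
  have h2 : (Ad e)^[2] u = (e * u - (e * u) * e) + (u * e - e * (u * e)) := by
    rw [show (2:ℕ) = 1 + 1 from rfl, Function.iterate_add_apply]
    simp only [Function.iterate_one]
    exact ad2_general halt he u
  rw [h2, adk_add]
  rw [adk_even_12 (mem12_part halt he u), adk_even_21 (mem21_part halt he u)]

end AdIter

end LieNAux

namespace LieNAux

variable {R : Type*} [NonUnitalNonAssocRing R] {e : R} {D : R → R} {p : ℕ}

lemma val_pair (u x : R) (k : ℕ) :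
    q u (x :: List.replicate k e) = (Ad e)^[k] (br u x) := by
  rw [q_cons, q_replicate]

lemma len_head : (List.replicate (2*p+2) (e : R)).length + 1 = 2*p+3 := by simp

lemma len_pair (x : R) : (x :: List.replicate (2*p+1) (e : R)).length + 1 = 2*p+3 := by simp

lemma len_mid : (List.replicate (2*p+1) (e : R)).length + 2 = 2*p+3 := by simp

/-- Claim 0 : `D 0 = 0`. -/
lemma D_zero (hq : QLaw (2*p+3) D) : D 0 = 0 := by
  have h := hq 0 (List.replicate (2*p+2) (0 : R)) (by simp)
  rw [q_zero_head] at h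
  have h1 : q (D 0) (List.replicate (2*p+2) (0 : R)) = 0 := by
    rw [show 2*p+2 = (2*p+1)+1 from rfl, List.replicate_succ, q_cons,
      show br (D 0) (0 : R) = 0 from by simp [br], q_zero_head]
  rw [h1, Finset.sum_eq_zero (fun i _ => q_zero_head _), zero_add] at h
  exact h

/-- From the two probe values vanishing, conclude centrality via condition (i). -/
lemma center_of_probes_i (halt : IsAlt R) (he : e * e = e)
    (hcondi : ∀ a ∈ P11 e, ∀ b ∈ P22 e,
      (∀ x ∈ P12 e, (a + b) * x = x * (a + b)) → a + b ∈ rctr R)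
    (t : R) (hoff : (Ad e)^[2*p+2] t = 0)
    (hsk : ∀ x ∈ P12 e, (Ad e)^[2*p+1] (br t x) = 0) : t ∈ rctr R := by
  have hgen := adk_even_general halt he p t
  rw [hoff] at hgen
  obtain ⟨h12, h21⟩ := sep12 (mem12_part halt he t) (mem21_part halt he t) hgen.symm
  have hmem11 : (e*t)*e ∈ P11 e := mem11_part halt he t
  have hmem22 : t - e*t - t*e + (e*t)*e ∈ P22 e := mem22_part halt he t
  have hdec : t = (e*t)*e + (t - e*t - t*e + (e*t)*e) := by
    have hd := decomp halt he t
    rw [h12, h21] at hd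
    simpa using hd
  obtain ⟨t1, ht1⟩ : ∃ u, (e*t)*e = u := ⟨_, rfl⟩
  rw [ht1] at hmem11 hmem22 hdec
  obtain ⟨t2, ht2⟩ : ∃ u, t - e*t - t*e + t1 = u := ⟨_, rfl⟩
  rw [ht2] at hmem22 hdec
  have hcomm : ∀ x ∈ P12 e, (t1 + t2) * x = x * (t1 + t2) := by
    intro x hx
    have hbr : br t x = t1 * x - x * t2 := by
      rw [show br t x = t*x - x*t from rfl, hdec]
      rw [add_mul, mul_add, p22_p12_zero halt hmem22 hx, p12_p11_zero halt hx hmem11]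
      abel
    have hbrmem : br t x ∈ P12 e := by
      rw [hbr]
      exact P12_sub (p11_p12 halt hmem11 hx) (p12_p22 halt hx hmem22)
    have h0 : -(br t x) = 0 := by rw [← adk_odd_12 hbrmem p]; exact hsk x hx
    have hbr0 : br t x = 0 := neg_eq_zero.mp h0
    have : t * x = x * t := sub_eq_zero.mp hbr0
    rw [← hdec]
    exact this
  have := hcondi _ hmem11 _ hmem22 hcomm
  rwa [← hdec] at this

/-- Mirror of `center_of_probes_i` using condition (ii). -/
lemma center_of_probes_ii (halt : IsAlt R) (he : e * e = e)
    (hcondii : ∀ a ∈ P11 e, ∀ b ∈ P22 e,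
      (∀ x ∈ P21 e, (a + b) * x = x * (a + b)) → a + b ∈ rctr R)
    (t : R) (hoff : (Ad e)^[2*p+2] t = 0)
    (hsk : ∀ y ∈ P21 e, (Ad e)^[2*p+1] (br t y) = 0) : t ∈ rctr R := by
  have hgen := adk_even_general halt he p t
  rw [hoff] at hgen
  obtain ⟨h12, h21⟩ := sep12 (mem12_part halt he t) (mem21_part halt he t) hgen.symm
  have hmem11 : (e*t)*e ∈ P11 e := mem11_part halt he t
  have hmem22 : t - e*t - t*e + (e*t)*e ∈ P22 e := mem22_part halt he t
  have hdec : t = (e*t)*e + (t - e*t - t*e + (e*t)*e) := by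
    have hd := decomp halt he t
    rw [h12, h21] at hd
    simpa using hd
  obtain ⟨t1, ht1⟩ : ∃ u, (e*t)*e = u := ⟨_, rfl⟩
  rw [ht1] at hmem11 hmem22 hdec
  obtain ⟨t2, ht2⟩ : ∃ u, t - e*t - t*e + t1 = u := ⟨_, rfl⟩
  rw [ht2] at hmem22 hdec
  have hcomm : ∀ y ∈ P21 e, (t1 + t2) * y = y * (t1 + t2) := by
    intro y hy
    have hbr : br t y = t2 * y - y * t1 := by
      rw [show br t y = t*y - y*t from rfl, hdec]
      rw [add_mul, mul_add, p11_p21_zero halt hmem11 hy, p21_p22_zero halt hy hmem22]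
      abel
    have hbrmem : br t y ∈ P21 e := by
      rw [hbr]
      exact P21_sub (p22_p21 halt hmem22 hy) (p21_p11 halt hy hmem11)
    have hbr0 : br t y = 0 := by rw [← adk_odd_21 hbrmem p]; exact hsk y hy
    have : t * y = y * t := sub_eq_zero.mp hbr0
    rw [← hdec]
    exact this
  have := hcondii _ hmem11 _ hmem22 hcomm
  rwa [← hdec] at this

/-- value of the head probe on `P11`. -/
lemma vA_11 {a : R} (ha : a ∈ P11 e) : (Ad e)^[2*p+2] a = 0 := adk_succ_11 ha (2*p+1)
lemma vA_22 {a : R} (ha : a ∈ P22 e) : (Ad e)^[2*p+2] a = 0 := adk_succ_22 ha (2*p+1)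
lemma vA_12 {b : R} (hb : b ∈ P12 e) : (Ad e)^[2*p+2] b = b := by
  rw [show 2*p+2 = 2*(p+1) by ring]; exact adk_even_12 hb (p+1)
lemma vA_21 {c : R} (hc : c ∈ P21 e) : (Ad e)^[2*p+2] c = c := by
  rw [show 2*p+2 = 2*(p+1) by ring]; exact adk_even_21 hc (p+1)

/-- Claim Z1 : `D(a+c) - D a - D c` is central, for `a ∈ P11`, `c ∈ P21`. -/
lemma claim_Z1 (halt : IsAlt R) (he : e * e = e)
    (hcondi : ∀ a ∈ P11 e, ∀ b ∈ P22 e,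
      (∀ x ∈ P12 e, (a + b) * x = x * (a + b)) → a + b ∈ rctr R)
    (hq : QLaw (2*p+3) D) :
    ∀ a ∈ P11 e, ∀ c ∈ P21 e, D (a + c) - D a - D c ∈ rctr R := by
  intro a ha c hc
  have hD0 := D_zero hq
  apply center_of_probes_i halt he hcondi
  · -- head probe
    have hA := master_head hq a c (List.replicate (2*p+2) e) len_head
    rw [q_replicate, q_replicate, q_replicate, q_replicate] at hA
    rw [adk_add, vA_11 ha, vA_21 hc, zero_add, hD0] at hA
    rw [← hA]
    abel
  · -- pair probe with x ∈ P12
    intro x hx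
    have hB := master_head hq a c (x :: List.replicate (2*p+1) e) (len_pair x)
    rw [val_pair, val_pair, val_pair, val_pair] at hB
    have hbra : br a x = a * x := by
      rw [show br a x = a*x - x*a from rfl, p12_p11_zero halt hx ha, sub_zero]
    have va : (Ad e)^[2*p+1] (br a x) = -(a*x) := by
      rw [hbra]; exact adk_odd_12 (p11_p12 halt ha hx) p
    have vc : (Ad e)^[2*p+1] (br c x) = 0 := by
      rw [show br c x = c*x - x*c from rfl, adk_sub,
        adk_succ_22 (p21_p12 halt hc hx) (2*p), adk_succ_11 (p12_p21 halt hx hc) (2*p),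
        sub_zero]
    have vsum : (Ad e)^[2*p+1] (br (a+c) x) = -(a*x) := by
      rw [br_add_left, adk_add, va, vc, add_zero]
    rw [va, vc, vsum, hD0] at hB
    rw [← hB]
    abel

/-- Claim Z2 : `D(a+b) - D a - D b` is central, for `a ∈ P11`, `b ∈ P12`. -/
lemma claim_Z2 (halt : IsAlt R) (he : e * e = e)
    (hcondii : ∀ a ∈ P11 e, ∀ b ∈ P22 e,
      (∀ x ∈ P21 e, (a + b) * x = x * (a + b)) → a + b ∈ rctr R)
    (hq : QLaw (2*p+3) D) :
    ∀ a ∈ P11 e, ∀ b ∈ P12 e, D (a + b) - D a - D b ∈ rctr R := by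
  intro a ha b hb
  have hD0 := D_zero hq
  apply center_of_probes_ii halt he hcondii
  · have hA := master_head hq a b (List.replicate (2*p+2) e) len_head
    rw [q_replicate, q_replicate, q_replicate, q_replicate] at hA
    rw [adk_add, vA_11 ha, vA_12 hb, zero_add, hD0] at hA
    rw [← hA]
    abel
  · intro y hy
    have hB := master_head hq a b (y :: List.replicate (2*p+1) e) (len_pair y)
    rw [val_pair, val_pair, val_pair, val_pair] at hB
    have hbra : br a y = -(y * a) := by
      rw [show br a y = a*y - y*a from rfl, p11_p21_zero halt ha hy]
      abel
    have va : (Ad e)^[2*p+1] (br a y) = -(y*a) := by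
      rw [hbra, adk_neg, adk_odd_21 (p21_p11 halt hy ha) p]
    have vb : (Ad e)^[2*p+1] (br b y) = 0 := by
      rw [show br b y = b*y - y*b from rfl, adk_sub,
        adk_succ_11 (p12_p21 halt hb hy) (2*p), adk_succ_22 (p21_p12 halt hy hb) (2*p),
        sub_zero]
    have vsum : (Ad e)^[2*p+1] (br (a+b) y) = -(y*a) := by
      rw [br_add_left, adk_add, va, vb, add_zero]
    rw [va, vb, vsum, hD0] at hB
    rw [← hB]
    abel

end LieNAux

namespace LieNAux

variable {R : Type*} [NonUnitalNonAssocRing R] {e : R} {D : R → R} {p : ℕ}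

/-- Claim A : `D` is additive on `P12 + P21`. -/
lemma claim_A (halt : IsAlt R) (he : e * e = e)
    (hcondi : ∀ a ∈ P11 e, ∀ b ∈ P22 e,
      (∀ x ∈ P12 e, (a + b) * x = x * (a + b)) → a + b ∈ rctr R)
    (hq : QLaw (2*p+3) D) :
    ∀ b ∈ P12 e, ∀ c ∈ P21 e, D (b + c) = D b + D c := by
  have key : ∀ β ∈ P12 e, ∀ γ ∈ P21 e, D (-γ + -β) = D (-γ) + D (-β) := by
    intro β hβ γ hγ
    have hM := master_mid0 hq (e + β) γ (-e) (List.replicate (2*p+1) e) len_mid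
    simp only [val_pair] at hM
    have hbrg : br (e+β) γ = β*γ - γ - γ*β := by
      simp only [br, add_mul, mul_add, hγ.1, hγ.2]
      abel
    have vγ : (Ad e)^[2*p+1] (br (e+β) γ) = -γ := by
      rw [hbrg, adk_sub, adk_sub, adk_succ_11 (p12_p21 halt hβ hγ) (2*p),
        adk_odd_21 hγ p, adk_succ_22 (p21_p12 halt hγ hβ) (2*p)]
      abel
    have hbre : br (e+β) (-e) = β := by
      simp only [br, mul_neg, neg_mul, add_mul, mul_add, he, hβ.1, hβ.2]
      abel
    have ve : (Ad e)^[2*p+1] (br (e+β) (-e)) = -β := by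
      rw [hbre]; exact adk_odd_12 hβ p
    have vsum : (Ad e)^[2*p+1] (br (e+β) (γ + -e)) = -γ + -β := by
      rw [br_add_right, adk_add, vγ, ve]
    have hz : D (γ + -e) - D γ - D (-e) ∈ rctr R := by
      have h0 := claim_Z1 halt he hcondi hq (-e) (P11_neg (P11_e he)) γ hγ
      have harg : (-e : R) + γ = γ + -e := by abel
      rw [harg] at h0
      have hre : D (γ + -e) - D (-e) - D γ = D (γ + -e) - D γ - D (-e) := by abel
      rwa [hre] at h0
    have hrhs : (Ad e)^[2*p+1] (br (e+β) (D (γ + -e) - D γ - D (-e))) = 0 := by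
      have hc := hz (e+β)
      rw [show br (e+β) (D (γ + -e) - D γ - D (-e))
          = (e+β) * (D (γ + -e) - D γ - D (-e))
            - (D (γ + -e) - D γ - D (-e)) * (e+β) from rfl, ← hc, sub_self, adk_zero]
    rw [vγ, ve, vsum, hrhs] at hM
    linear_combination (norm := abel) hM
  intro b hb c hc
  have h := key (-b) (P12_neg hb) (-c) (P21_neg hc)
  simp only [neg_neg] at h
  rw [add_comm b c, h]
  exact add_comm _ _

/-- Claim C : `D` is additive on `P12`. -/
lemma claim_C (halt : IsAlt R) (he : e * e = e)
    (hcondii : ∀ a ∈ P11 e, ∀ b ∈ P22 e,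
      (∀ x ∈ P21 e, (a + b) * x = x * (a + b)) → a + b ∈ rctr R)
    (hq : QLaw (2*p+3) D)
    (hAdd : ∀ b ∈ P12 e, ∀ c ∈ P21 e, D (b + c) = D b + D c) :
    ∀ b ∈ P12 e, ∀ b' ∈ P12 e, D (b + b') = D b + D b' := by
  have key : ∀ β ∈ P12 e, ∀ β' ∈ P12 e, D (-β + -β') = D (-β) + D (-β') := by
    intro β hβ β' hβ'
    have hM := master_mid0 hq (e + β') β (-e) (List.replicate (2*p+1) e) len_mid
    simp only [val_pair] at hM
    have hK : β'*β - β*β' ∈ P21 e := P21_sub (p12_p12 halt hβ' hβ) (p12_p12 halt hβ hβ')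
    have hbrb : br (e+β') β = β + β'*β - β*β' := by
      simp only [br, add_mul, mul_add, hβ.1, hβ.2]
      abel
    have vβ : (Ad e)^[2*p+1] (br (e+β') β) = -β + β'*β - β*β' := by
      rw [hbrb, adk_sub, adk_add, adk_odd_12 hβ p,
        adk_odd_21 (p12_p12 halt hβ' hβ) p, adk_odd_21 (p12_p12 halt hβ hβ') p]
    have hbre : br (e+β') (-e) = β' := by
      simp only [br, mul_neg, neg_mul, add_mul, mul_add, he, hβ'.1, hβ'.2]
      abel
    have ve : (Ad e)^[2*p+1] (br (e+β') (-e)) = -β' := by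
      rw [hbre]; exact adk_odd_12 hβ' p
    have vsum : (Ad e)^[2*p+1] (br (e+β') (β + -e)) = (-β + β'*β - β*β') + -β' := by
      rw [br_add_right, adk_add, vβ, ve]
    have hz : D (β + -e) - D β - D (-e) ∈ rctr R := by
      have h0 := claim_Z2 halt he hcondii hq (-e) (P11_neg (P11_e he)) β hβ
      have harg : (-e : R) + β = β + -e := by abel
      rw [harg] at h0
      have hre : D (β + -e) - D (-e) - D β = D (β + -e) - D β - D (-e) := by abel
      rwa [hre] at h0
    have hrhs : (Ad e)^[2*p+1] (br (e+β') (D (β + -e) - D β - D (-e))) = 0 := by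
      have hc := hz (e+β')
      rw [show br (e+β') (D (β + -e) - D β - D (-e))
          = (e+β') * (D (β + -e) - D β - D (-e))
            - (D (β + -e) - D β - D (-e)) * (e+β') from rfl, ← hc, sub_self, adk_zero]
    rw [vβ, ve, vsum, hrhs] at hM
    have e1 : D ((-β + β'*β - β*β') + -β') = D (-β + -β') + D (β'*β - β*β') := by
      rw [show (-β + β'*β - β*β') + -β' = (-β + -β') + (β'*β - β*β') from by abel]
      exact hAdd _ (P12_add (P12_neg hβ) (P12_neg hβ')) _ hK
    have e2 : D (-β + β'*β - β*β') = D (-β) + D (β'*β - β*β') := by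
      rw [show -β + β'*β - β*β' = -β + (β'*β - β*β') from by abel]
      exact hAdd _ (P12_neg hβ) _ hK
    rw [e1, e2] at hM
    linear_combination (norm := abel) hM
  intro b hb b' hb'
  have h := key (-b) (P12_neg hb) (-b') (P12_neg hb')
  simpa only [neg_neg] using h

/-- Main core lemma. -/
lemma core (halt : IsAlt R) (he : e * e = e)
    (hcondi : ∀ a ∈ P11 e, ∀ b ∈ P22 e,
      (∀ x ∈ P12 e, (a + b) * x = x * (a + b)) → a + b ∈ rctr R)
    (hcondii : ∀ a ∈ P11 e, ∀ b ∈ P22 e,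
      (∀ x ∈ P21 e, (a + b) * x = x * (a + b)) → a + b ∈ rctr R)
    (hq : QLaw (2*p+3) D) :
    ∀ a ∈ P11 e, ∀ b ∈ P12 e, ∀ c ∈ P21 e, ∀ d ∈ P22 e,
      ∃ z ∈ rctr R, D (a + b + c + d) = D a + D b + D c + D d + z := by
  have hD0 := D_zero hq
  have hAdd := claim_A halt he hcondi hq
  have hC := claim_C halt he hcondii hq hAdd
  intro a ha b hb c hc d hd
  refine ⟨D (a+b+c+d) - D a - D b - D c - D d, ?_, by abel⟩
  apply center_of_probes_i halt he hcondi
  · -- head probe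
    have hA4 := master_head4 hq a b c d (List.replicate (2*p+2) e) len_head
    simp only [q_replicate] at hA4
    rw [adk_add, adk_add, adk_add, vA_11 ha, vA_12 hb, vA_21 hc, vA_22 hd,
      zero_add, add_zero, hD0, hAdd b hb c hc] at hA4
    rw [← hA4]
    abel
  · intro x hx
    have hB4 := master_head4 hq a b c d (x :: List.replicate (2*p+1) e) (len_pair x)
    simp only [val_pair] at hB4
    have va : (Ad e)^[2*p+1] (br a x) = -(a*x) := by
      rw [show br a x = a*x - x*a from rfl, p12_p11_zero halt hx ha, sub_zero]
      exact adk_odd_12 (p11_p12 halt ha hx) p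
    have hbxmem : b*x - x*b ∈ P21 e := P21_sub (p12_p12 halt hb hx) (p12_p12 halt hx hb)
    have vb : (Ad e)^[2*p+1] (br b x) = b*x - x*b := by
      rw [show br b x = b*x - x*b from rfl]
      exact adk_odd_21 hbxmem p
    have vc : (Ad e)^[2*p+1] (br c x) = 0 := by
      rw [show br c x = c*x - x*c from rfl, adk_sub,
        adk_succ_22 (p21_p12 halt hc hx) (2*p), adk_succ_11 (p12_p21 halt hx hc) (2*p),
        sub_zero]
    have vd : (Ad e)^[2*p+1] (br d x) = x*d := by
      have hbrd : br d x = -(x*d) := by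
        rw [show br d x = d*x - x*d from rfl, p22_p12_zero halt hd hx]
        abel
      rw [hbrd, adk_neg, adk_odd_12 (p12_p22 halt hx hd) p, neg_neg]
    have vsum : (Ad e)^[2*p+1] (br (a+b+c+d) x) = -(a*x) + (b*x - x*b) + x*d := by
      rw [br_add_left, br_add_left, br_add_left, adk_add, adk_add, adk_add,
        va, vb, vc, vd]
      abel
    rw [va, vb, vc, vd, vsum, hD0] at hB4
    have hsplit : D (-(a*x) + (b*x - x*b) + x*d)
        = D (-(a*x)) + D (x*d) + D (b*x - x*b) := by
      rw [show -(a*x) + (b*x - x*b) + x*d = (-(a*x) + x*d) + (b*x - x*b) from by abel]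
      rw [hAdd _ (P12_add (P12_neg (p11_p12 halt ha hx)) (p12_p22 halt hx hd)) _ hbxmem]
      rw [hC _ (P12_neg (p11_p12 halt ha hx)) _ (p12_p22 halt hx hd)]
    rw [hsplit] at hB4
    rw [← hB4]
    abel

end LieNAux


theorem stmt5 {R : Type*} [NonUnitalNonAssocRing R] (halt : IsAlt R)
    (e₁ : R) (he : e₁ * e₁ = e₁) (hne : e₁ ≠ 0)
    (hnu : ¬ ∀ x : R, e₁ * x = x ∧ x * e₁ = x)
    (hcondi : ∀ a ∈ P11 e₁, ∀ b ∈ P22 e₁,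
      (∀ x ∈ P12 e₁, (a + b) * x = x * (a + b)) → a + b ∈ rctr R)
    (hcondii : ∀ a ∈ P11 e₁, ∀ b ∈ P22 e₁,
      (∀ x ∈ P21 e₁, (a + b) * x = x * (a + b)) → a + b ∈ rctr R)
    (n : ℕ) (hn : 2 ≤ n) (D : R → R) (hD : IsMultLieNDeriv n D) :
    ∀ a ∈ P11 e₁, ∀ b ∈ P12 e₁, ∀ c ∈ P21 e₁, ∀ d ∈ P22 e₁,
      ∃ z ∈ rctr R, D (a + b + c + d) = D a + D b + D c + D d + z := by
  have hq1 : LieNAux.QLaw n D := LieNAux.qlaw_of_pnlaw hD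
  have hq2 : LieNAux.QLaw (2 * n - 1) D := LieNAux.qlaw_boot hq1 hn
  have hp : 2 * (n - 2) + 3 = 2 * n - 1 := by omega
  have hq : LieNAux.QLaw (2 * (n - 2) + 3) D := by rw [hp]; exact hq2
  exact LieNAux.core halt he hcondi hcondii hq
end
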